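/- arXiv:1511.08737 — 8 statements merged into one kernel-verified Lean document; each statement's English description precedes it below -/
import Mathlib

section
/- Let x₁,x₂,x₃,x₄ ∈ V be pairwise η-orthogonal vectors, set φ̂ := ι(x₁)ι(x₂)ι(x₃)ι(x₄) ∈ Cl(V) and β_v := ι(v)·φ̂ − 3·φ̂·ι(v) for v ∈ V. Then for all v,w ∈ V the commutator [β_v, β_w] = β_v·β_w − β_w·β_v lies in L and commutes with φ̂ in Cl(V). -/
noncomputable section

variable (V : Type) [AddCommGroup V] [Module ℝ V]

/-- The quadratic form `v ↦ -η(v,v)`; its Clifford algebra satisfies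
`ι v * ι v = -η(v,v) • 1`. -/
def Qf (η : LinearMap.BilinForm ℝ V) : QuadraticForm ℝ V := (-η).toQuadraticMap

/-- `A` belongs to `so(V)`: it is skew-adjoint with respect to `η`. -/
def IsSkew (η : LinearMap.BilinForm ℝ V) (A : Module.End ℝ V) : Prop :=
  ∀ v w : V, η (A v) w + η v (A w) = 0

/-- `e` is an `η`-orthonormal basis exhibiting the 'mostly minus' Lorentzian
signature `(1,10)` in dimension 11. -/
def IsLorentzianBasis (η : LinearMap.BilinForm ℝ V) (e : Module.Basis (Fin 11) ℝ V) : Prop :=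
  ∀ i j, η (e i) (e j) = if i = j then (if (i : ℕ) = 0 then 1 else -1) else 0

/-- `L`: the span of the commutators `ι u * ι w - ι w * ι u`, i.e. the image of `so(V)`
inside the Clifford algebra. -/
def Lsub (η : LinearMap.BilinForm ℝ V) : Submodule ℝ (CliffordAlgebra (Qf V η)) :=
  Submodule.span ℝ {x | ∃ u w : V,
    x = CliffordAlgebra.ι (Qf V η) u * CliffordAlgebra.ι (Qf V η) w
      - CliffordAlgebra.ι (Qf V η) w * CliffordAlgebra.ι (Qf V η) u}

/-- The commutator `[x,y] = x·y − y·x` in the Clifford algebra. -/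
def brk (η : LinearMap.BilinForm ℝ V) (x y : CliffordAlgebra (Qf V η)) :
    CliffordAlgebra (Qf V η) := x * y - y * x

/-- `β_v = ι(v)·c − 3·c·ι(v)` for an element `c` of the Clifford algebra. -/
def betaC (η : LinearMap.BilinForm ℝ V) (c : CliffordAlgebra (Qf V η)) (v : V) :
    CliffordAlgebra (Qf V η) :=
  CliffordAlgebra.ι (Qf V η) v * c - (3 : ℝ) • (c * CliffordAlgebra.ι (Qf V η) v)

section keylemmas
variable {A : Type} [Ring A] [Algebra ℝ A]

theorem key_aux (u t y1 y2 y3 y4 : A)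
    (a1 a2 a3 a4 b1 b2 b3 b4 c q1 q2 q3 q4 : ℝ)
    (htu : t * u = (-c) • (1:A) - u * t)
    (h1u : y1 * u = (-a1) • (1:A) - u * y1)
    (h2u : y2 * u = (-a2) • (1:A) - u * y2)
    (h3u : y3 * u = (-a3) • (1:A) - u * y3)
    (h4u : y4 * u = (-a4) • (1:A) - u * y4)
    (h1t : y1 * t = (-b1) • (1:A) - t * y1)
    (h2t : y2 * t = (-b2) • (1:A) - t * y2)
    (h3t : y3 * t = (-b3) • (1:A) - t * y3)
    (h4t : y4 * t = (-b4) • (1:A) - t * y4)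
    (h21 : y2 * y1 = -(y1 * y2))
    (h31 : y3 * y1 = -(y1 * y3))
    (h41 : y4 * y1 = -(y1 * y4))
    (h32 : y3 * y2 = -(y2 * y3))
    (h42 : y4 * y2 = -(y2 * y4))
    (h43 : y4 * y3 = -(y3 * y4))
    (hs1 : y1 * y1 = (-q1) • (1:A))
    (hs2 : y2 * y2 = (-q2) • (1:A))
    (hs3 : y3 * y3 = (-q3) • (1:A))
    (hs4 : y4 * y4 = (-q4) • (1:A)) :
    (u*(y1*y2*y3*y4) - (3:ℝ)•((y1*y2*y3*y4)*u)) * (t*(y1*y2*y3*y4) - (3:ℝ)•((y1*y2*y3*y4)*t))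
      - (t*(y1*y2*y3*y4) - (3:ℝ)•((y1*y2*y3*y4)*t)) * (u*(y1*y2*y3*y4) - (3:ℝ)•((y1*y2*y3*y4)*u))
    = (4*(q1*(q2*(q3*q4)))) • (u*t - t*u)
      - (2*(b1*(q2*(q3*q4)))) • (u*y1 - y1*u)
      - (2*(b2*(q1*(q3*q4)))) • (u*y2 - y2*u)
      - (2*(b3*(q1*(q2*q4)))) • (u*y3 - y3*u)
      - (2*(b4*(q1*(q2*q3)))) • (u*y4 - y4*u)
      + (2*(a1*(q2*(q3*q4)))) • (t*y1 - y1*t)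
      + (2*(a2*(q1*(q3*q4)))) • (t*y2 - y2*t)
      + (2*(a3*(q1*(q2*q4)))) • (t*y3 - y3*t)
      + (2*(a4*(q1*(q2*q3)))) • (t*y4 - y4*t)
      + (3*((a2*b1 - a1*b2)*(q3*q4))) • (y1*y2 - y2*y1)
      + (3*((a3*b1 - a1*b3)*(q2*q4))) • (y1*y3 - y3*y1)
      + (3*((a4*b1 - a1*b4)*(q2*q3))) • (y1*y4 - y4*y1)
      + (3*((a3*b2 - a2*b3)*(q1*q4))) • (y2*y3 - y3*y2)
      + (3*((a4*b2 - a2*b4)*(q1*q3))) • (y2*y4 - y4*y2)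
      + (3*((a4*b3 - a3*b4)*(q1*q2))) • (y3*y4 - y4*y3) := by
  have htu' : ∀ z : A, t*(u*z) = (-c) • z - u*(t*z) := fun z => by
    rw [← mul_assoc, htu, sub_mul, smul_mul_assoc, one_mul, mul_assoc]
  have h1u' : ∀ z : A, y1*(u*z) = (-a1) • z - u*(y1*z) := fun z => by
    rw [← mul_assoc, h1u, sub_mul, smul_mul_assoc, one_mul, mul_assoc]
  have h2u' : ∀ z : A, y2*(u*z) = (-a2) • z - u*(y2*z) := fun z => by
    rw [← mul_assoc, h2u, sub_mul, smul_mul_assoc, one_mul, mul_assoc]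
  have h3u' : ∀ z : A, y3*(u*z) = (-a3) • z - u*(y3*z) := fun z => by
    rw [← mul_assoc, h3u, sub_mul, smul_mul_assoc, one_mul, mul_assoc]
  have h4u' : ∀ z : A, y4*(u*z) = (-a4) • z - u*(y4*z) := fun z => by
    rw [← mul_assoc, h4u, sub_mul, smul_mul_assoc, one_mul, mul_assoc]
  have h1t' : ∀ z : A, y1*(t*z) = (-b1) • z - t*(y1*z) := fun z => by
    rw [← mul_assoc, h1t, sub_mul, smul_mul_assoc, one_mul, mul_assoc]
  have h2t' : ∀ z : A, y2*(t*z) = (-b2) • z - t*(y2*z) := fun z => by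
    rw [← mul_assoc, h2t, sub_mul, smul_mul_assoc, one_mul, mul_assoc]
  have h3t' : ∀ z : A, y3*(t*z) = (-b3) • z - t*(y3*z) := fun z => by
    rw [← mul_assoc, h3t, sub_mul, smul_mul_assoc, one_mul, mul_assoc]
  have h4t' : ∀ z : A, y4*(t*z) = (-b4) • z - t*(y4*z) := fun z => by
    rw [← mul_assoc, h4t, sub_mul, smul_mul_assoc, one_mul, mul_assoc]
  have h21' : ∀ z : A, y2*(y1*z) = -(y1*(y2*z)) := fun z => by
    rw [← mul_assoc, h21, neg_mul, mul_assoc]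
  have h31' : ∀ z : A, y3*(y1*z) = -(y1*(y3*z)) := fun z => by
    rw [← mul_assoc, h31, neg_mul, mul_assoc]
  have h41' : ∀ z : A, y4*(y1*z) = -(y1*(y4*z)) := fun z => by
    rw [← mul_assoc, h41, neg_mul, mul_assoc]
  have h32' : ∀ z : A, y3*(y2*z) = -(y2*(y3*z)) := fun z => by
    rw [← mul_assoc, h32, neg_mul, mul_assoc]
  have h42' : ∀ z : A, y4*(y2*z) = -(y2*(y4*z)) := fun z => by
    rw [← mul_assoc, h42, neg_mul, mul_assoc]
  have h43' : ∀ z : A, y4*(y3*z) = -(y3*(y4*z)) := fun z => by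
    rw [← mul_assoc, h43, neg_mul, mul_assoc]
  have hs1' : ∀ z : A, y1*(y1*z) = (-q1) • z := fun z => by
    rw [← mul_assoc, hs1, smul_mul_assoc, one_mul]
  have hs2' : ∀ z : A, y2*(y2*z) = (-q2) • z := fun z => by
    rw [← mul_assoc, hs2, smul_mul_assoc, one_mul]
  have hs3' : ∀ z : A, y3*(y3*z) = (-q3) • z := fun z => by
    rw [← mul_assoc, hs3, smul_mul_assoc, one_mul]
  have hs4' : ∀ z : A, y4*(y4*z) = (-q4) • z := fun z => by
    rw [← mul_assoc, hs4, smul_mul_assoc, one_mul]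
  simp only [mul_sub, sub_mul, mul_add, add_mul, smul_mul_assoc, mul_smul_comm, mul_assoc,
    smul_sub, smul_add, smul_smul, smul_neg, neg_smul, neg_neg, mul_one, one_mul,
    neg_mul, mul_neg,
    htu, htu', h1u, h1u', h2u, h2u', h3u, h3u', h4u, h4u',
    h1t, h1t', h2t, h2t', h3t, h3t', h4t, h4t',
    h21, h21', h31, h31', h41, h41', h32, h32', h42, h42', h43, h43',
    hs1, hs1', hs2, hs2', hs3, hs3', hs4, hs4']
  module

theorem keyc_aux (u t y1 y2 y3 y4 : A)
    (a1 a2 a3 a4 b1 b2 b3 b4 q1 q2 q3 q4 : ℝ)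
    (h1u : y1 * u = (-a1) • (1:A) - u * y1)
    (h2u : y2 * u = (-a2) • (1:A) - u * y2)
    (h3u : y3 * u = (-a3) • (1:A) - u * y3)
    (h4u : y4 * u = (-a4) • (1:A) - u * y4)
    (h1t : y1 * t = (-b1) • (1:A) - t * y1)
    (h2t : y2 * t = (-b2) • (1:A) - t * y2)
    (h3t : y3 * t = (-b3) • (1:A) - t * y3)
    (h4t : y4 * t = (-b4) • (1:A) - t * y4)
    (h21 : y2 * y1 = -(y1 * y2))
    (h31 : y3 * y1 = -(y1 * y3))
    (h41 : y4 * y1 = -(y1 * y4))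
    (h32 : y3 * y2 = -(y2 * y3))
    (h42 : y4 * y2 = -(y2 * y4))
    (h43 : y4 * y3 = -(y3 * y4))
    (hs1 : y1 * y1 = (-q1) • (1:A))
    (hs2 : y2 * y2 = (-q2) • (1:A))
    (hs3 : y3 * y3 = (-q3) • (1:A))
    (hs4 : y4 * y4 = (-q4) • (1:A)) :
    ((4*(q1*(q2*(q3*q4)))) • (u*t - t*u)
      - (2*(b1*(q2*(q3*q4)))) • (u*y1 - y1*u)
      - (2*(b2*(q1*(q3*q4)))) • (u*y2 - y2*u)
      - (2*(b3*(q1*(q2*q4)))) • (u*y3 - y3*u)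
      - (2*(b4*(q1*(q2*q3)))) • (u*y4 - y4*u)
      + (2*(a1*(q2*(q3*q4)))) • (t*y1 - y1*t)
      + (2*(a2*(q1*(q3*q4)))) • (t*y2 - y2*t)
      + (2*(a3*(q1*(q2*q4)))) • (t*y3 - y3*t)
      + (2*(a4*(q1*(q2*q3)))) • (t*y4 - y4*t)
      + (3*((a2*b1 - a1*b2)*(q3*q4))) • (y1*y2 - y2*y1)
      + (3*((a3*b1 - a1*b3)*(q2*q4))) • (y1*y3 - y3*y1)
      + (3*((a4*b1 - a1*b4)*(q2*q3))) • (y1*y4 - y4*y1)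
      + (3*((a3*b2 - a2*b3)*(q1*q4))) • (y2*y3 - y3*y2)
      + (3*((a4*b2 - a2*b4)*(q1*q3))) • (y2*y4 - y4*y2)
      + (3*((a4*b3 - a3*b4)*(q1*q2))) • (y3*y4 - y4*y3)) * (y1*y2*y3*y4)
    = (y1*y2*y3*y4) *
      ((4*(q1*(q2*(q3*q4)))) • (u*t - t*u)
      - (2*(b1*(q2*(q3*q4)))) • (u*y1 - y1*u)
      - (2*(b2*(q1*(q3*q4)))) • (u*y2 - y2*u)
      - (2*(b3*(q1*(q2*q4)))) • (u*y3 - y3*u)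
      - (2*(b4*(q1*(q2*q3)))) • (u*y4 - y4*u)
      + (2*(a1*(q2*(q3*q4)))) • (t*y1 - y1*t)
      + (2*(a2*(q1*(q3*q4)))) • (t*y2 - y2*t)
      + (2*(a3*(q1*(q2*q4)))) • (t*y3 - y3*t)
      + (2*(a4*(q1*(q2*q3)))) • (t*y4 - y4*t)
      + (3*((a2*b1 - a1*b2)*(q3*q4))) • (y1*y2 - y2*y1)
      + (3*((a3*b1 - a1*b3)*(q2*q4))) • (y1*y3 - y3*y1)
      + (3*((a4*b1 - a1*b4)*(q2*q3))) • (y1*y4 - y4*y1)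
      + (3*((a3*b2 - a2*b3)*(q1*q4))) • (y2*y3 - y3*y2)
      + (3*((a4*b2 - a2*b4)*(q1*q3))) • (y2*y4 - y4*y2)
      + (3*((a4*b3 - a3*b4)*(q1*q2))) • (y3*y4 - y4*y3)) := by
  have h1u' : ∀ z : A, y1*(u*z) = (-a1) • z - u*(y1*z) := fun z => by
    rw [← mul_assoc, h1u, sub_mul, smul_mul_assoc, one_mul, mul_assoc]
  have h2u' : ∀ z : A, y2*(u*z) = (-a2) • z - u*(y2*z) := fun z => by
    rw [← mul_assoc, h2u, sub_mul, smul_mul_assoc, one_mul, mul_assoc]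
  have h3u' : ∀ z : A, y3*(u*z) = (-a3) • z - u*(y3*z) := fun z => by
    rw [← mul_assoc, h3u, sub_mul, smul_mul_assoc, one_mul, mul_assoc]
  have h4u' : ∀ z : A, y4*(u*z) = (-a4) • z - u*(y4*z) := fun z => by
    rw [← mul_assoc, h4u, sub_mul, smul_mul_assoc, one_mul, mul_assoc]
  have h1t' : ∀ z : A, y1*(t*z) = (-b1) • z - t*(y1*z) := fun z => by
    rw [← mul_assoc, h1t, sub_mul, smul_mul_assoc, one_mul, mul_assoc]
  have h2t' : ∀ z : A, y2*(t*z) = (-b2) • z - t*(y2*z) := fun z => by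
    rw [← mul_assoc, h2t, sub_mul, smul_mul_assoc, one_mul, mul_assoc]
  have h3t' : ∀ z : A, y3*(t*z) = (-b3) • z - t*(y3*z) := fun z => by
    rw [← mul_assoc, h3t, sub_mul, smul_mul_assoc, one_mul, mul_assoc]
  have h4t' : ∀ z : A, y4*(t*z) = (-b4) • z - t*(y4*z) := fun z => by
    rw [← mul_assoc, h4t, sub_mul, smul_mul_assoc, one_mul, mul_assoc]
  have h21' : ∀ z : A, y2*(y1*z) = -(y1*(y2*z)) := fun z => by
    rw [← mul_assoc, h21, neg_mul, mul_assoc]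
  have h31' : ∀ z : A, y3*(y1*z) = -(y1*(y3*z)) := fun z => by
    rw [← mul_assoc, h31, neg_mul, mul_assoc]
  have h41' : ∀ z : A, y4*(y1*z) = -(y1*(y4*z)) := fun z => by
    rw [← mul_assoc, h41, neg_mul, mul_assoc]
  have h32' : ∀ z : A, y3*(y2*z) = -(y2*(y3*z)) := fun z => by
    rw [← mul_assoc, h32, neg_mul, mul_assoc]
  have h42' : ∀ z : A, y4*(y2*z) = -(y2*(y4*z)) := fun z => by
    rw [← mul_assoc, h42, neg_mul, mul_assoc]
  have h43' : ∀ z : A, y4*(y3*z) = -(y3*(y4*z)) := fun z => by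
    rw [← mul_assoc, h43, neg_mul, mul_assoc]
  have hs1' : ∀ z : A, y1*(y1*z) = (-q1) • z := fun z => by
    rw [← mul_assoc, hs1, smul_mul_assoc, one_mul]
  have hs2' : ∀ z : A, y2*(y2*z) = (-q2) • z := fun z => by
    rw [← mul_assoc, hs2, smul_mul_assoc, one_mul]
  have hs3' : ∀ z : A, y3*(y3*z) = (-q3) • z := fun z => by
    rw [← mul_assoc, hs3, smul_mul_assoc, one_mul]
  have hs4' : ∀ z : A, y4*(y4*z) = (-q4) • z := fun z => by
    rw [← mul_assoc, hs4, smul_mul_assoc, one_mul]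
  simp only [mul_sub, sub_mul, mul_add, add_mul, smul_mul_assoc, mul_smul_comm, mul_assoc,
    smul_sub, smul_add, smul_smul, smul_neg, neg_smul, neg_neg, mul_one, one_mul,
    neg_mul, mul_neg,
    h1u, h1u', h2u, h2u', h3u, h3u', h4u, h4u',
    h1t, h1t', h2t, h2t', h3t, h3t', h4t, h4t',
    h21, h21', h31, h31', h41, h41', h32, h32', h42, h42', h43, h43',
    hs1, hs1', hs2, hs2', hs3, hs3', hs4, hs4']
  module

end keylemmas

/-- for `φ̂ = ι(x₁)ι(x₂)ι(x₃)ι(x₄)` a Clifford product of pairwise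
`η`-orthogonal vectors and `β_v = ι(v)·φ̂ − 3·φ̂·ι(v)`, the commutator `[β_v, β_w]` lies
in `L` and commutes with `φ̂` in the Clifford algebra. -/
theorem stmt_4
    (η : LinearMap.BilinForm ℝ V) (e : Module.Basis (Fin 11) ℝ V) (he : IsLorentzianBasis V η e)
    (x₁ x₂ x₃ x₄ : V)
    (horth : ∀ i j : Fin 4, i ≠ j → η (![x₁, x₂, x₃, x₄] i) (![x₁, x₂, x₃, x₄] j) = 0)
    (φc : CliffordAlgebra (Qf V η))
    (hφc : φc = CliffordAlgebra.ι (Qf V η) x₁ * CliffordAlgebra.ι (Qf V η) x₂ *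
      CliffordAlgebra.ι (Qf V η) x₃ * CliffordAlgebra.ι (Qf V η) x₄) :
    ∀ v w : V,
      brk V η (betaC V η φc v) (betaC V η φc w) ∈ Lsub V η ∧
      brk V η (betaC V η φc v) (betaC V η φc w) * φc
        = φc * brk V η (betaC V η φc v) (betaC V η φc w) := by
  intro v w
  subst hφc
  have hswap : ∀ p r : V, CliffordAlgebra.ι (Qf V η) p * CliffordAlgebra.ι (Qf V η) r
      + CliffordAlgebra.ι (Qf V η) r * CliffordAlgebra.ι (Qf V η) p
      = (-(η p r + η r p)) • (1 : CliffordAlgebra (Qf V η)) := by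
    intro p r
    rw [CliffordAlgebra.ι_mul_ι_add_swap, Algebra.algebraMap_eq_smul_one]
    congr 1
    show QuadraticMap.polar ((-η).toQuadraticMap) p r = -(η p r + η r p)
    rw [LinearMap.BilinMap.polar_toQuadraticMap]
    simp only [LinearMap.neg_apply]
    ring
  have hgen : ∀ p r : V, CliffordAlgebra.ι (Qf V η) r * CliffordAlgebra.ι (Qf V η) p
      = (-(η p r + η r p)) • (1 : CliffordAlgebra (Qf V η))
        - CliffordAlgebra.ι (Qf V η) p * CliffordAlgebra.ι (Qf V η) r :=
    fun p r => eq_sub_of_add_eq' (hswap p r)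
  have hsq : ∀ p : V, CliffordAlgebra.ι (Qf V η) p * CliffordAlgebra.ι (Qf V η) p
      = (-(η p p)) • (1 : CliffordAlgebra (Qf V η)) := by
    intro p
    rw [CliffordAlgebra.ι_sq_scalar, Algebra.algebraMap_eq_smul_one]
    congr 1
  have o12 : η x₁ x₂ = 0 := by simpa using horth 0 1 (by decide)
  have o21 : η x₂ x₁ = 0 := by simpa using horth 1 0 (by decide)
  have o13 : η x₁ x₃ = 0 := by simpa using horth 0 2 (by decide)
  have o31 : η x₃ x₁ = 0 := by simpa using horth 2 0 (by decide)
  have o14 : η x₁ x₄ = 0 := by simpa using horth 0 3 (by decide)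
  have o41 : η x₄ x₁ = 0 := by simpa using horth 3 0 (by decide)
  have o23 : η x₂ x₃ = 0 := by simpa using horth 1 2 (by decide)
  have o32 : η x₃ x₂ = 0 := by simpa using horth 2 1 (by decide)
  have o24 : η x₂ x₄ = 0 := by simpa using horth 1 3 (by decide)
  have o42 : η x₄ x₂ = 0 := by simpa using horth 3 1 (by decide)
  have o34 : η x₃ x₄ = 0 := by simpa using horth 2 3 (by decide)
  have o43 : η x₄ x₃ = 0 := by simpa using horth 3 2 (by decide)
  have h21 : CliffordAlgebra.ι (Qf V η) x₂ * CliffordAlgebra.ι (Qf V η) x₁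
      = -(CliffordAlgebra.ι (Qf V η) x₁ * CliffordAlgebra.ι (Qf V η) x₂) :=
    eq_neg_of_add_eq_zero_right (by rw [hswap x₁ x₂, o12, o21]; simp)
  have h31 : CliffordAlgebra.ι (Qf V η) x₃ * CliffordAlgebra.ι (Qf V η) x₁
      = -(CliffordAlgebra.ι (Qf V η) x₁ * CliffordAlgebra.ι (Qf V η) x₃) :=
    eq_neg_of_add_eq_zero_right (by rw [hswap x₁ x₃, o13, o31]; simp)
  have h41 : CliffordAlgebra.ι (Qf V η) x₄ * CliffordAlgebra.ι (Qf V η) x₁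
      = -(CliffordAlgebra.ι (Qf V η) x₁ * CliffordAlgebra.ι (Qf V η) x₄) :=
    eq_neg_of_add_eq_zero_right (by rw [hswap x₁ x₄, o14, o41]; simp)
  have h32 : CliffordAlgebra.ι (Qf V η) x₃ * CliffordAlgebra.ι (Qf V η) x₂
      = -(CliffordAlgebra.ι (Qf V η) x₂ * CliffordAlgebra.ι (Qf V η) x₃) :=
    eq_neg_of_add_eq_zero_right (by rw [hswap x₂ x₃, o23, o32]; simp)
  have h42 : CliffordAlgebra.ι (Qf V η) x₄ * CliffordAlgebra.ι (Qf V η) x₂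
      = -(CliffordAlgebra.ι (Qf V η) x₂ * CliffordAlgebra.ι (Qf V η) x₄) :=
    eq_neg_of_add_eq_zero_right (by rw [hswap x₂ x₄, o24, o42]; simp)
  have h43 : CliffordAlgebra.ι (Qf V η) x₄ * CliffordAlgebra.ι (Qf V η) x₃
      = -(CliffordAlgebra.ι (Qf V η) x₃ * CliffordAlgebra.ι (Qf V η) x₄) :=
    eq_neg_of_add_eq_zero_right (by rw [hswap x₃ x₄, o34, o43]; simp)
  have heq := key_aux (CliffordAlgebra.ι (Qf V η) v) (CliffordAlgebra.ι (Qf V η) w)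
    (CliffordAlgebra.ι (Qf V η) x₁) (CliffordAlgebra.ι (Qf V η) x₂)
    (CliffordAlgebra.ι (Qf V η) x₃) (CliffordAlgebra.ι (Qf V η) x₄)
    _ _ _ _ _ _ _ _ _ _ _ _ _
    (hgen v w) (hgen v x₁) (hgen v x₂) (hgen v x₃) (hgen v x₄)
    (hgen w x₁) (hgen w x₂) (hgen w x₃) (hgen w x₄)
    h21 h31 h41 h32 h42 h43 (hsq x₁) (hsq x₂) (hsq x₃) (hsq x₄)
  have mem : ∀ p r : V, CliffordAlgebra.ι (Qf V η) p * CliffordAlgebra.ι (Qf V η) r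
      - CliffordAlgebra.ι (Qf V η) r * CliffordAlgebra.ι (Qf V η) p ∈ Lsub V η :=
    fun p r => Submodule.subset_span ⟨p, r, rfl⟩
  unfold brk betaC
  constructor
  · rw [heq]
    repeat'
      first
        | exact Submodule.smul_mem _ _ (mem _ _)
        | apply Submodule.sub_mem
        | apply Submodule.add_mem
  · rw [heq]
    exact keyc_aux (CliffordAlgebra.ι (Qf V η) v) (CliffordAlgebra.ι (Qf V η) w)
      (CliffordAlgebra.ι (Qf V η) x₁) (CliffordAlgebra.ι (Qf V η) x₂)
      (CliffordAlgebra.ι (Qf V η) x₃) (CliffordAlgebra.ι (Qf V η) x₄)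
      _ _ _ _ _ _ _ _ _ _ _ _
      (hgen v x₁) (hgen v x₂) (hgen v x₃) (hgen v x₄)
      (hgen w x₁) (hgen w x₂) (hgen w x₃) (hgen w x₄)
      h21 h31 h41 h32 h42 h43 (hsq x₁) (hsq x₂) (hsq x₃) (hsq x₄)
end
end

section
/- Let x₁,x₂,x₃,x₄ ∈ V be pairwise η-orthogonal with η(xᵢ,xᵢ) ≠ 0 for each i, let Π := span{x₁,x₂,x₃,x₄} (so η restricted to Π is nondegenerate and V = Π ⊕ Π^⊥, where Π^⊥ is the η-orthogonal complement), and set φ̂ := ι(x₁)ι(x₂)ι(x₃)ι(x₄) ∈ Cl(V) and β_v := ι(v)·φ̂ − 3·φ̂·ι(v). For v,w ∈ V write v = v⊤ + v⊥ and w = w⊤ + w⊥ with v⊤,w⊤ ∈ Π and v⊥,w⊥ ∈ Π^⊥. Then in Cl(V): [β_v, β_w] = −16·(ι(v⊤)ι(w⊤) − ι(w⊤)ι(v⊤))·φ̂² + 4·(ι(v⊥)ι(w⊥) − ι(w⊥)ι(v⊥))·φ̂². -/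
noncomputable section

variable (V : Type) [AddCommGroup V] [Module ℝ V]

private lemma step_sgn {R : Type*} [Ring R] {u a : R} (ε : ℤ) (h : u * a = ε • (a * u))
    (z : R) : u * (a * z) = ε • (a * (u * z)) := by
  rw [← mul_assoc, h, smul_mul_assoc, mul_assoc]

private lemma move4 {R : Type*} [Ring R] {u a b c d : R} {ε₁ ε₂ ε₃ ε₄ : ℤ}
    (h1 : u * a = ε₁ • (a * u)) (h2 : u * b = ε₂ • (b * u))
    (h3 : u * c = ε₃ • (c * u)) (h4 : u * d = ε₄ • (d * u)) :
    u * (a * b * c * d) = (ε₁ * ε₂ * ε₃ * ε₄) • (a * b * c * d * u) := by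
  have : a * b * c * d = a * (b * (c * d)) := by noncomm_ring
  rw [this, step_sgn ε₁ h1, step_sgn ε₂ h2, step_sgn ε₃ h3, h4]
  simp only [mul_smul_comm, smul_smul, mul_assoc]

/-- the nondegenerate-plane commutator formula
`[β_v, β_w] = −16·[ι v⊤, ι w⊤]·φ̂² + 4·[ι v⊥, ι w⊥]·φ̂²`. -/
theorem stmt_5
    (η : LinearMap.BilinForm ℝ V) (e : Module.Basis (Fin 11) ℝ V) (he : IsLorentzianBasis V η e)
    (x₁ x₂ x₃ x₄ : V)
    (horth : ∀ i j : Fin 4, i ≠ j → η (![x₁, x₂, x₃, x₄] i) (![x₁, x₂, x₃, x₄] j) = 0)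
    (hnonnull : ∀ i : Fin 4, η (![x₁, x₂, x₃, x₄] i) (![x₁, x₂, x₃, x₄] i) ≠ 0)
    (φc : CliffordAlgebra (Qf V η))
    (hφc : φc = CliffordAlgebra.ι (Qf V η) x₁ * CliffordAlgebra.ι (Qf V η) x₂ *
      CliffordAlgebra.ι (Qf V η) x₃ * CliffordAlgebra.ι (Qf V η) x₄)
    (v w vT wT vP wP : V)
    (hvT : vT ∈ Submodule.span ℝ {x₁, x₂, x₃, x₄})
    (hwT : wT ∈ Submodule.span ℝ {x₁, x₂, x₃, x₄})
    (hvP : vP ∈ η.orthogonal (Submodule.span ℝ {x₁, x₂, x₃, x₄}))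
    (hwP : wP ∈ η.orthogonal (Submodule.span ℝ {x₁, x₂, x₃, x₄}))
    (hv : v = vT + vP) (hw : w = wT + wP) :
    brk V η (betaC V η φc v) (betaC V η φc w)
      = (-16 : ℝ) • (brk V η (CliffordAlgebra.ι (Qf V η) vT) (CliffordAlgebra.ι (Qf V η) wT)
          * (φc * φc))
        + (4 : ℝ) • (brk V η (CliffordAlgebra.ι (Qf V η) vP) (CliffordAlgebra.ι (Qf V η) wP)
          * (φc * φc)) := by
  set ι := CliffordAlgebra.ι (Qf V η) with hι
  -- symmetry of η
  have hsym : ∀ a b : V, η a b = η b a := by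
    have : η = η.flip := by
      apply e.ext; intro i
      apply Module.Basis.ext e; intro j
      have h1 := he i j
      have h2 := he j i
      show (η (e i)) (e j) = (η (e j)) (e i)
      rw [h1, h2]
      rcases eq_or_ne i j with h | h
      · subst h; rfl
      · rw [if_neg h, if_neg (Ne.symm h)]
    intro a b
    conv_lhs => rw [this]
    rfl
  -- anticommutation for η-orthogonal pairs
  have hac : ∀ a b : V, η a b = 0 → ι a * ι b = (-1 : ℤ) • (ι b * ι a) := by
    intro a b h1
    rw [neg_smul, one_smul]
    refine CliffordAlgebra.ι_mul_ι_comm_of_isOrtho ?_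
    rw [QuadraticMap.isOrtho_def]
    have h2 : η b a = 0 := by rw [hsym b a]; exact h1
    simp [Qf, LinearMap.BilinMap.toQuadraticMap_apply, h1, h2]
    ring
  have hself : ∀ a : V, ι a * ι a = (1 : ℤ) • (ι a * ι a) := fun a => (one_smul ℤ _).symm
  -- moving ι u through φc, u a generator
  have hgen : ∀ u ∈ ({x₁, x₂, x₃, x₄} : Set V), ι u * φc = -(φc * ι u) := by
    intro u hu
    have h12 := horth 0 1 (by decide); have h13 := horth 0 2 (by decide)
    have h14 := horth 0 3 (by decide); have h21 := horth 1 0 (by decide)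
    have h23 := horth 1 2 (by decide); have h24 := horth 1 3 (by decide)
    have h31 := horth 2 0 (by decide); have h32 := horth 2 1 (by decide)
    have h34 := horth 2 3 (by decide); have h41 := horth 3 0 (by decide)
    have h42 := horth 3 1 (by decide); have h43 := horth 3 2 (by decide)
    simp only [Matrix.cons_val_zero, Matrix.cons_val_one, Matrix.head_cons,
      Matrix.cons_val_two, Matrix.tail_cons, Matrix.cons_val_three] at h12 h13 h14 h21 h23 h24 h31 h32 h34 h41 h42 h43
    simp only [Set.mem_insert_iff, Set.mem_singleton_iff] at hu
    rcases hu with rfl | rfl | rfl | rfl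
    · have := move4 (hself u) (hac u x₂ h12) (hac u x₃ h13) (hac u x₄ h14)
      rw [hφc, this]; norm_num
    · have := move4 (hac u x₁ h21) (hself u) (hac u x₃ h23) (hac u x₄ h24)
      rw [hφc, this]; norm_num
    · have := move4 (hac u x₁ h31) (hac u x₂ h32) (hself u) (hac u x₄ h34)
      rw [hφc, this]; norm_num
    · have := move4 (hac u x₁ h41) (hac u x₂ h42) (hac u x₃ h43) (hself u)
      rw [hφc, this]; norm_num
  -- moving ι u through φc, u in the span
  have hT : ∀ u ∈ Submodule.span ℝ ({x₁, x₂, x₃, x₄} : Set V), ι u * φc = -(φc * ι u) := by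
    intro u hu
    induction hu using Submodule.span_induction with
    | mem x hx => exact hgen x hx
    | zero => simp
    | add x y _ _ hx hy => rw [map_add, add_mul, hx, hy, mul_add, neg_add]
    | smul r x _ hx => rw [map_smul, smul_mul_assoc, hx, mul_smul_comm, smul_neg]
  -- moving ι u through φc, u in the orthogonal complement
  have hP : ∀ u ∈ η.orthogonal (Submodule.span ℝ ({x₁, x₂, x₃, x₄} : Set V)),
      ι u * φc = φc * ι u := by
    intro u hu
    have hmem : ∀ y ∈ ({x₁, x₂, x₃, x₄} : Set V), η u y = 0 := by
      intro y hy
      rw [hsym]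
      exact hu y (Submodule.subset_span hy)
    have h1 := hmem x₁ (by simp); have h2 := hmem x₂ (by simp)
    have h3 := hmem x₃ (by simp); have h4 := hmem x₄ (by simp [Set.mem_insert_iff])
    have := move4 (hac u x₁ h1) (hac u x₂ h2) (hac u x₃ h3) (hac u x₄ h4)
    rw [hφc, this]; norm_num
  -- notation
  set A := ι vT; set B := ι wT; set C := ι vP; set D := ι wP
  have hφA : φc * A = -(A * φc) := by rw [hT vT hvT, neg_neg]
  have hφB : φc * B = -(B * φc) := by rw [hT wT hwT, neg_neg]
  have hφC : φc * C = C * φc := (hP vP hvP).symm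
  have hφD : φc * D = D * φc := (hP wP hwP).symm
  -- cross anticommutation
  have hAD : A * D = -(D * A) := by
    have := hac vT wP (hwP vT hvT); rw [this]; norm_num; rfl
  have hCB : C * B = -(B * C) := by
    have h : η vP wT = 0 := by rw [hsym]; exact hvP wT hwT
    have := hac vP wT h; rw [this]; norm_num; rfl
  -- beta decompositions
  have hβv : betaC V η φc v = (4 : ℝ) • (A * φc) - (2 : ℝ) • (C * φc) := by
    rw [betaC, hv, map_add, add_mul, mul_add, hT vT hvT, hP vP hvP]
    simp only [smul_add, smul_neg, smul_sub]
    module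
  have hβw : betaC V η φc w = (4 : ℝ) • (B * φc) - (2 : ℝ) • (D * φc) := by
    rw [betaC, hw, map_add, add_mul, mul_add, hT wT hwT, hP wP hwP]
    simp only [smul_add, smul_neg, smul_sub]
    module
  -- products
  have prodK : ∀ X Y : CliffordAlgebra (Qf V η), φc * Y = -(Y * φc) →
      (X * φc) * (Y * φc) = -(X * Y * (φc * φc)) := by
    intro X Y h
    calc (X * φc) * (Y * φc) = X * (φc * Y) * φc := by noncomm_ring
    _ = X * (-(Y * φc)) * φc := by rw [h]
    _ = -(X * Y * (φc * φc)) := by noncomm_ring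
  have prodC : ∀ X Y : CliffordAlgebra (Qf V η), φc * Y = Y * φc →
      (X * φc) * (Y * φc) = X * Y * (φc * φc) := by
    intro X Y h
    calc (X * φc) * (Y * φc) = X * (φc * Y) * φc := by noncomm_ring
    _ = X * (Y * φc) * φc := by rw [h]
    _ = X * Y * (φc * φc) := by noncomm_ring
  have pAB := prodK A B hφB
  have pAD := prodC A D hφD
  have pCB := prodK C B hφB
  have pCD := prodC C D hφD
  have pBA := prodK B A hφA
  have pBC := prodC B C hφC
  have pDA := prodK D A hφA
  have pDC := prodC D C hφC
  have hAD' : A * D * (φc * φc) = -(D * A * (φc * φc)) := by rw [hAD]; noncomm_ring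
  have hCB' : C * B * (φc * φc) = -(B * C * (φc * φc)) := by rw [hCB]; noncomm_ring
  rw [brk, hβv, hβw, brk, brk]
  simp only [smul_mul_assoc, mul_smul_comm, sub_mul, mul_sub, smul_sub, smul_smul]
  simp only [pAB, pAD, pCB, pCD, pBA, pBC, pDA, pDC, hAD', hCB']
  module
end
end

section
/- Let e₊, e₋ ∈ V with η(e₊,e₊) = η(e₋,e₋) = 0 and η(e₊,e₋) = 1, and let x₁,x₂,x₃ ∈ V be pairwise η-orthogonal, each η-orthogonal to both e₊ and e₋, with η(xᵢ,xᵢ) ≠ 0 for each i. Set f := ι(x₁)ι(x₂)ι(x₃) ∈ Cl(V), φ̂ := ι(e₊)·f, π := span{x₁,x₂,x₃}, W := the η-orthogonal complement of span{e₊,e₋} ⊕ π, and β_v := ι(v)·φ̂ − 3·φ̂·ι(v). For v ∈ V write v = v₊ + v₋ + v⊤ + v⊥ with v₊ ∈ ℝe₊, v₋ ∈ ℝe₋, v⊤ ∈ π, v⊥ ∈ W, and set θ(v) := η(v, e₊). Then for all v,w ∈ V, in Cl(V): [β_v, β_w] = 8·θ(v)·(4ι(w⊤) + ι(w⊥))·ι(e₊)·f²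 − 8·θ(w)·(4ι(v⊤) + ι(v⊥))·ι(e₊)·f². -/
noncomputable section

variable (V : Type) [AddCommGroup V] [Module ℝ V]

lemma Qf_apply (η : LinearMap.BilinForm ℝ V) (x : V) : Qf V η x = -(η x x) := by
  rw [Qf, LinearMap.BilinMap.toQuadraticMap_apply]
  simp

lemma polar_Qf (η : LinearMap.BilinForm ℝ V) (x y : V) :
    QuadraticMap.polar (Qf V η) x y = -(η x y) - η y x := by
  rw [Qf, LinearMap.BilinMap.polar_toQuadraticMap]
  simp
  ring

lemma ι_anti (η : LinearMap.BilinForm ℝ V) {u w : V} (h1 : η u w = 0) (h2 : η w u = 0) :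
    CliffordAlgebra.ι (Qf V η) u * CliffordAlgebra.ι (Qf V η) w = -(CliffordAlgebra.ι (Qf V η) w * CliffordAlgebra.ι (Qf V η) u) := by
  have h := CliffordAlgebra.ι_mul_ι_add_swap (Q := Qf V η) u w
  rw [polar_Qf, h1, h2] at h
  simp only [neg_zero, sub_zero, map_zero] at h
  exact eq_neg_of_add_eq_zero_left h

lemma ι_sq0 (η : LinearMap.BilinForm ℝ V) {u : V} (h : η u u = 0) :
    CliffordAlgebra.ι (Qf V η) u * CliffordAlgebra.ι (Qf V η) u = 0 := by
  rw [CliffordAlgebra.ι_sq_scalar, Qf_apply, h, neg_zero, map_zero]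

lemma st6_swap {A : Type*} [Ring A] {a b : A} (h : a * b = -(b * a)) (x : A) :
    a * (b * x) = -(b * (a * x)) := by rw [← mul_assoc, h, neg_mul, mul_assoc]

lemma st6_comm {A : Type*} [Ring A] {a b : A} (h : a * b = b * a) (x : A) :
    a * (b * x) = b * (a * x) := by rw [← mul_assoc, h, mul_assoc]

lemma st6_zero {A : Type*} [Ring A] {a b : A} (h : a * b = 0) (x : A) :
    a * (b * x) = 0 := by rw [← mul_assoc, h, zero_mul]

lemma st6_key {A : Type*} [Ring A] [Algebra ℝ A]
    (E M Tv Tw Pv Pw F : A)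
    (hEE : E * E = 0) (hMM : M * M = 0)
    (hME : M * E = (-2 : ℝ) • (1 : A) - E * M)
    (hTvE : Tv * E = -(E * Tv)) (hTwE : Tw * E = -(E * Tw))
    (hPvE : Pv * E = -(E * Pv)) (hPwE : Pw * E = -(E * Pw))
    (hFE : F * E = -(E * F))
    (hTvM : Tv * M = -(M * Tv)) (hTwM : Tw * M = -(M * Tw))
    (hPvM : Pv * M = -(M * Pv)) (hPwM : Pw * M = -(M * Pw))
    (hFM : F * M = -(M * F))
    (hFTv : F * Tv = Tv * F) (hFTw : F * Tw = Tw * F)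
    (hFPv : F * Pv = -(Pv * F)) (hFPw : F * Pw = -(Pw * F))
    (av bv aw bw : ℝ) :
    ((av • E + bv • M + Tv + Pv) * (E * F)
        - (3 : ℝ) • ((E * F) * (av • E + bv • M + Tv + Pv)))
      * ((aw • E + bw • M + Tw + Pw) * (E * F)
        - (3 : ℝ) • ((E * F) * (aw • E + bw • M + Tw + Pw)))
    - ((aw • E + bw • M + Tw + Pw) * (E * F)
        - (3 : ℝ) • ((E * F) * (aw • E + bw • M + Tw + Pw)))
      * ((av • E + bv • M + Tv + Pv) * (E * F)
        - (3 : ℝ) • ((E * F) * (av • E + bv • M + Tv + Pv)))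
    = (8 * bv) • (((4 : ℝ) • Tw + Pw) * (E * (F * F)))
      - (8 * bw) • (((4 : ℝ) • Tv + Pv) * (E * (F * F))) := by
  have hME' : ∀ x : A, M * (E * x) = (-2 : ℝ) • x - E * (M * x) := fun x => by
    rw [← mul_assoc, hME, sub_mul, smul_mul_assoc, one_mul, mul_assoc]
  simp only [mul_add, add_mul, mul_sub, sub_mul, smul_mul_assoc, mul_smul_comm, mul_assoc,
    hEE, st6_zero hEE, hMM, st6_zero hMM, hME, hME',
    hTvE, st6_swap hTvE, hTwE, st6_swap hTwE, hPvE, st6_swap hPvE, hPwE, st6_swap hPwE,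
    hFE, st6_swap hFE, hTvM, st6_swap hTvM, hTwM, st6_swap hTwM,
    hPvM, st6_swap hPvM, hPwM, st6_swap hPwM, hFM, st6_swap hFM,
    hFTv, st6_comm hFTv, hFTw, st6_comm hFTw, hFPv, st6_swap hFPv, hFPw, st6_swap hFPw,
    mul_neg, neg_mul, neg_neg, smul_neg, mul_zero, zero_mul, smul_zero, mul_one, one_mul,
    sub_zero, zero_sub, add_zero, zero_add, neg_zero]
  module

theorem stmt_6
    (η : LinearMap.BilinForm ℝ V) (e : Module.Basis (Fin 11) ℝ V) (he : IsLorentzianBasis V η e)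
    (ep em : V)
    (hep : η ep ep = 0) (hem : η em em = 0) (hepem : η ep em = 1)
    (x₁ x₂ x₃ : V)
    (horth : ∀ i j : Fin 3, i ≠ j → η (![x₁, x₂, x₃] i) (![x₁, x₂, x₃] j) = 0)
    (horthp : ∀ i : Fin 3, η (![x₁, x₂, x₃] i) ep = 0)
    (horthm : ∀ i : Fin 3, η (![x₁, x₂, x₃] i) em = 0)
    (hnonnull : ∀ i : Fin 3, η (![x₁, x₂, x₃] i) (![x₁, x₂, x₃] i) ≠ 0)
    (f : CliffordAlgebra (Qf V η))
    (hf : f = CliffordAlgebra.ι (Qf V η) x₁ * CliffordAlgebra.ι (Qf V η) x₂ *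
      CliffordAlgebra.ι (Qf V η) x₃)
    (φc : CliffordAlgebra (Qf V η)) (hφc : φc = CliffordAlgebra.ι (Qf V η) ep * f)
    (v w vp vm vT vP wp wm wT wP : V)
    (hvp : vp ∈ Submodule.span ℝ {ep}) (hvm : vm ∈ Submodule.span ℝ {em})
    (hwp : wp ∈ Submodule.span ℝ {ep}) (hwm : wm ∈ Submodule.span ℝ {em})
    (hvT : vT ∈ Submodule.span ℝ {x₁, x₂, x₃})
    (hwT : wT ∈ Submodule.span ℝ {x₁, x₂, x₃})
    (hvP : vP ∈ η.orthogonal (Submodule.span ℝ {ep, em, x₁, x₂, x₃}))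
    (hwP : wP ∈ η.orthogonal (Submodule.span ℝ {ep, em, x₁, x₂, x₃}))
    (hv : v = vp + vm + vT + vP) (hw : w = wp + wm + wT + wP) :
    brk V η (betaC V η φc v) (betaC V η φc w)
      = (8 * η v ep) • (((4 : ℝ) • CliffordAlgebra.ι (Qf V η) wT
            + CliffordAlgebra.ι (Qf V η) wP) * (CliffordAlgebra.ι (Qf V η) ep * (f * f)))
        - (8 * η w ep) • (((4 : ℝ) • CliffordAlgebra.ι (Qf V η) vT
            + CliffordAlgebra.ι (Qf V η) vP) * (CliffordAlgebra.ι (Qf V η) ep * (f * f))) := by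
  have hsymm : ∀ a b : V, η a b = η b a := by
    have hflip : η = η.flip := by
      refine e.ext fun i => ?_
      refine e.ext fun j => ?_
      show (η (e i)) (e j) = (η (e j)) (e i)
      rw [he i j, he j i]
      rcases eq_or_ne i j with h | h
      · subst h; rfl
      · rw [if_neg h, if_neg (Ne.symm h)]
    intro a b
    conv_lhs => rw [hflip]
    rfl
  have o12 : η x₁ x₂ = 0 := by simpa using horth 0 1 (by decide)
  have o13 : η x₁ x₃ = 0 := by simpa using horth 0 2 (by decide)
  have o23 : η x₂ x₃ = 0 := by simpa using horth 1 2 (by decide)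
  have p1 : η x₁ ep = 0 := by simpa using horthp 0
  have p2 : η x₂ ep = 0 := by simpa using horthp 1
  have p3 : η x₃ ep = 0 := by simpa using horthp 2
  have m1 : η x₁ em = 0 := by simpa using horthm 0
  have m2 : η x₂ em = 0 := by simpa using horthm 1
  have m3 : η x₃ em = 0 := by simpa using horthm 2
  have hmep : η em ep = 1 := (hsymm em ep).trans hepem
  have hPv : ∀ n ∈ ({ep, em, x₁, x₂, x₃} : Set V), η n vP = 0 :=
    fun n hn => hvP n (Submodule.subset_span hn)
  have hPw : ∀ n ∈ ({ep, em, x₁, x₂, x₃} : Set V), η n wP = 0 :=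
    fun n hn => hwP n (Submodule.subset_span hn)
  have hPvep : η ep vP = 0 := hPv ep (by simp)
  have hPvem : η em vP = 0 := hPv em (by simp)
  have hPvx1 : η x₁ vP = 0 := hPv x₁ (by simp)
  have hPvx2 : η x₂ vP = 0 := hPv x₂ (by simp)
  have hPvx3 : η x₃ vP = 0 := hPv x₃ (by simp)
  have hPwep : η ep wP = 0 := hPw ep (by simp)
  have hPwem : η em wP = 0 := hPw em (by simp)
  have hPwx1 : η x₁ wP = 0 := hPw x₁ (by simp)
  have hPwx2 : η x₂ wP = 0 := hPw x₂ (by simp)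
  have hPwx3 : η x₃ wP = 0 := hPw x₃ (by simp)
  obtain ⟨av, hav⟩ := Submodule.mem_span_singleton.mp hvp
  obtain ⟨bv, hbv⟩ := Submodule.mem_span_singleton.mp hvm
  obtain ⟨aw, haw⟩ := Submodule.mem_span_singleton.mp hwp
  obtain ⟨bw, hbw⟩ := Submodule.mem_span_singleton.mp hwm
  obtain ⟨c1, zv, hzv, hvTd0⟩ := Submodule.mem_span_insert.mp hvT
  obtain ⟨c2, c3, hzv2⟩ := Submodule.mem_span_pair.mp hzv
  have hvTd : vT = c1 • x₁ + (c2 • x₂ + c3 • x₃) := by rw [hvTd0, ← hzv2]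
  obtain ⟨d1, zw, hzw, hwTd0⟩ := Submodule.mem_span_insert.mp hwT
  obtain ⟨d2, d3, hzw2⟩ := Submodule.mem_span_pair.mp hzw
  have hwTd : wT = d1 • x₁ + (d2 • x₂ + d3 • x₃) := by rw [hwTd0, ← hzw2]
  have hvTep : η vT ep = 0 := by
    rw [hvTd]
    simp [map_add, map_smul, LinearMap.add_apply, LinearMap.smul_apply, p1, p2, p3]
  have hwTep : η wT ep = 0 := by
    rw [hwTd]
    simp [map_add, map_smul, LinearMap.add_apply, LinearMap.smul_apply, p1, p2, p3]
  have hθv : η v ep = bv := by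
    rw [hv, ← hav, ← hbv]
    simp [map_add, map_smul, LinearMap.add_apply, LinearMap.smul_apply, hep, hmep, hvTep,
      (hsymm vP ep).trans hPvep]
  have hθw : η w ep = bw := by
    rw [hw, ← haw, ← hbw]
    simp [map_add, map_smul, LinearMap.add_apply, LinearMap.smul_apply, hep, hmep, hwTep,
      (hsymm wP ep).trans hPwep]
  have anti : ∀ a b : V, η a b = 0 → CliffordAlgebra.ι (Qf V η) a * CliffordAlgebra.ι (Qf V η) b = -(CliffordAlgebra.ι (Qf V η) b * CliffordAlgebra.ι (Qf V η) a) :=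
    fun a b h => ι_anti V η h ((hsymm b a).trans h)
  have hEE : CliffordAlgebra.ι (Qf V η) ep * CliffordAlgebra.ι (Qf V η) ep = 0 := ι_sq0 V η hep
  have hMM : CliffordAlgebra.ι (Qf V η) em * CliffordAlgebra.ι (Qf V η) em = 0 := ι_sq0 V η hem
  have hME : CliffordAlgebra.ι (Qf V η) em * CliffordAlgebra.ι (Qf V η) ep
      = (-2 : ℝ) • (1 : CliffordAlgebra (Qf V η)) - CliffordAlgebra.ι (Qf V η) ep * CliffordAlgebra.ι (Qf V η) em := by
    have h := CliffordAlgebra.ι_mul_ι_add_swap (Q := Qf V η) em ep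
    rw [polar_Qf, hmep, hepem] at h
    have h2 : algebraMap ℝ (CliffordAlgebra (Qf V η)) (-(1 : ℝ) - 1)
        = (-2 : ℝ) • (1 : CliffordAlgebra (Qf V η)) := by
      rw [Algebra.algebraMap_eq_smul_one]; norm_num
    rw [h2] at h
    exact eq_sub_of_add_eq h
  have hX1E := anti x₁ ep p1
  have hX2E := anti x₂ ep p2
  have hX3E := anti x₃ ep p3
  have hX1M := anti x₁ em m1
  have hX2M := anti x₂ em m2
  have hX3M := anti x₃ em m3
  have hX2X1 := anti x₂ x₁ ((hsymm x₂ x₁).trans o12)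
  have hX3X1 := anti x₃ x₁ ((hsymm x₃ x₁).trans o13)
  have hX3X2 := anti x₃ x₂ ((hsymm x₃ x₂).trans o23)
  have hX1Pv := anti x₁ vP hPvx1
  have hX2Pv := anti x₂ vP hPvx2
  have hX3Pv := anti x₃ vP hPvx3
  have hX1Pw := anti x₁ wP hPwx1
  have hX2Pw := anti x₂ wP hPwx2
  have hX3Pw := anti x₃ wP hPwx3
  have hPvE := anti vP ep ((hsymm vP ep).trans hPvep)
  have hPvM := anti vP em ((hsymm vP em).trans hPvem)
  have hPwE := anti wP ep ((hsymm wP ep).trans hPwep)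
  have hPwM := anti wP em ((hsymm wP em).trans hPwem)
  have hfE : f * CliffordAlgebra.ι (Qf V η) ep = -(CliffordAlgebra.ι (Qf V η) ep * f) := by
    rw [hf]; simp only [mul_assoc, hX3E, mul_neg, neg_neg, st6_swap hX2E, st6_swap hX1E]
  have hfM : f * CliffordAlgebra.ι (Qf V η) em = -(CliffordAlgebra.ι (Qf V η) em * f) := by
    rw [hf]; simp only [mul_assoc, hX3M, mul_neg, neg_neg, st6_swap hX2M, st6_swap hX1M]
  have hfPv : f * CliffordAlgebra.ι (Qf V η) vP = -(CliffordAlgebra.ι (Qf V η) vP * f) := by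
    rw [hf]; simp only [mul_assoc, hX3Pv, mul_neg, neg_neg, st6_swap hX2Pv, st6_swap hX1Pv]
  have hfPw : f * CliffordAlgebra.ι (Qf V η) wP = -(CliffordAlgebra.ι (Qf V η) wP * f) := by
    rw [hf]; simp only [mul_assoc, hX3Pw, mul_neg, neg_neg, st6_swap hX2Pw, st6_swap hX1Pw]
  have hfX1 : f * CliffordAlgebra.ι (Qf V η) x₁ = CliffordAlgebra.ι (Qf V η) x₁ * f := by
    rw [hf]; simp only [mul_assoc, hX3X1, mul_neg, neg_neg, st6_swap hX2X1]
  have hfX2 : f * CliffordAlgebra.ι (Qf V η) x₂ = CliffordAlgebra.ι (Qf V η) x₂ * f := by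
    rw [hf]; simp only [mul_assoc, hX3X2, mul_neg, neg_neg, st6_swap hX2X1]
  have hfX3 : f * CliffordAlgebra.ι (Qf V η) x₃ = CliffordAlgebra.ι (Qf V η) x₃ * f := by
    rw [hf]; simp only [mul_assoc, st6_swap hX3X1, st6_swap hX3X2, mul_neg, neg_neg]
  have hITv : CliffordAlgebra.ι (Qf V η) vT = c1 • CliffordAlgebra.ι (Qf V η) x₁ + (c2 • CliffordAlgebra.ι (Qf V η) x₂ + c3 • CliffordAlgebra.ι (Qf V η) x₃) := by
    rw [hvTd]; simp [map_add, map_smul]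
  have hITw : CliffordAlgebra.ι (Qf V η) wT = d1 • CliffordAlgebra.ι (Qf V η) x₁ + (d2 • CliffordAlgebra.ι (Qf V η) x₂ + d3 • CliffordAlgebra.ι (Qf V η) x₃) := by
    rw [hwTd]; simp [map_add, map_smul]
  have hTvE : CliffordAlgebra.ι (Qf V η) vT * CliffordAlgebra.ι (Qf V η) ep = -(CliffordAlgebra.ι (Qf V η) ep * CliffordAlgebra.ι (Qf V η) vT) := by
    rw [hITv]
    simp only [add_mul, mul_add, smul_mul_assoc, mul_smul_comm, hX1E, hX2E, hX3E, smul_neg]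
    module
  have hTvM : CliffordAlgebra.ι (Qf V η) vT * CliffordAlgebra.ι (Qf V η) em = -(CliffordAlgebra.ι (Qf V η) em * CliffordAlgebra.ι (Qf V η) vT) := by
    rw [hITv]
    simp only [add_mul, mul_add, smul_mul_assoc, mul_smul_comm, hX1M, hX2M, hX3M, smul_neg]
    module
  have hTwE : CliffordAlgebra.ι (Qf V η) wT * CliffordAlgebra.ι (Qf V η) ep = -(CliffordAlgebra.ι (Qf V η) ep * CliffordAlgebra.ι (Qf V η) wT) := by
    rw [hITw]
    simp only [add_mul, mul_add, smul_mul_assoc, mul_smul_comm, hX1E, hX2E, hX3E, smul_neg]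
    module
  have hTwM : CliffordAlgebra.ι (Qf V η) wT * CliffordAlgebra.ι (Qf V η) em = -(CliffordAlgebra.ι (Qf V η) em * CliffordAlgebra.ι (Qf V η) wT) := by
    rw [hITw]
    simp only [add_mul, mul_add, smul_mul_assoc, mul_smul_comm, hX1M, hX2M, hX3M, smul_neg]
    module
  have hfTv : f * CliffordAlgebra.ι (Qf V η) vT = CliffordAlgebra.ι (Qf V η) vT * f := by
    rw [hITv]
    simp only [mul_add, add_mul, mul_smul_comm, smul_mul_assoc, hfX1, hfX2, hfX3]
  have hfTw : f * CliffordAlgebra.ι (Qf V η) wT = CliffordAlgebra.ι (Qf V η) wT * f := by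
    rw [hITw]
    simp only [mul_add, add_mul, mul_smul_comm, smul_mul_assoc, hfX1, hfX2, hfX3]
  have hIv : CliffordAlgebra.ι (Qf V η) v = av • CliffordAlgebra.ι (Qf V η) ep + bv • CliffordAlgebra.ι (Qf V η) em + CliffordAlgebra.ι (Qf V η) vT + CliffordAlgebra.ι (Qf V η) vP := by
    rw [hv, ← hav, ← hbv, map_add, map_add, map_add, map_smul, map_smul]
  have hIw : CliffordAlgebra.ι (Qf V η) w = aw • CliffordAlgebra.ι (Qf V η) ep + bw • CliffordAlgebra.ι (Qf V η) em + CliffordAlgebra.ι (Qf V η) wT + CliffordAlgebra.ι (Qf V η) wP := by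
    rw [hw, ← haw, ← hbw, map_add, map_add, map_add, map_smul, map_smul]
  unfold brk betaC
  rw [hφc, hIv, hIw, hθv, hθw]
  exact st6_key _ _ _ _ _ _ _ hEE hMM hME hTvE hTwE hPvE hPwE hfE hTvM hTwM hPvM hPwM hfM
    hfTv hfTw hfPv hfPw av bv aw bw
end
end

section
/- Let φ = x₁∧x₂∧x₃∧x₄ ∈ Λ⁴V be a nonzero decomposable 4-form with 4-plane Π := span{x₁,x₂,x₃,x₄}, and suppose the restriction of η to Π is nondegenerate (so V = Π ⊕ Π^⊥). Then for every A ∈ so(V): A·φ = 0 if and only if A(Π) ⊆ Π and A(Π^⊥) ⊆ Π^⊥. (Hence h_φ = so(Π) ⊕ so(Π^⊥).) -/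
noncomputable section

variable (V : Type) [AddCommGroup V] [Module ℝ V]

/-- `D` is the derivation action of `gl(V)` on the exterior algebra: for each
`A : End(V)`, `D A` is the unique derivation extending `A`. -/
def IsDerAction (D : Module.End ℝ V → Module.End ℝ (ExteriorAlgebra ℝ V)) : Prop :=
  ∀ A : Module.End ℝ V,
    (∀ v : V, D A (ExteriorAlgebra.ι ℝ v) = ExteriorAlgebra.ι ℝ (A v)) ∧
    (∀ r : ℝ, D A (algebraMap ℝ (ExteriorAlgebra ℝ V) r) = 0) ∧
    (∀ x y : ExteriorAlgebra ℝ V, D A (x * y) = D A x * y + x * D A y)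

section AuxStmt12
open ExteriorAlgebra
variable {W : Type} [AddCommGroup W] [Module ℝ W]

lemma aux12_prod (a b c d : W) :
    ι ℝ a * ι ℝ b * ι ℝ c * ι ℝ d = ιMulti ℝ 4 ![a, b, c, d] := by
  simp [ιMulti_apply, List.ofFn_succ, mul_assoc]

lemma aux12_slot (X : Fin 4 → W) (c : Fin 4 → ℝ) (i : Fin 4) :
    ιMulti ℝ 4 (Function.update X i (∑ j : Fin 4, c j • X j)) = c i • ιMulti ℝ 4 X := by
  have h1 : (ιMulti ℝ 4 (M := W)) (Function.update X i (∑ j : Fin 4, c j • X j))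
      = ∑ j : Fin 4, c j • (ιMulti ℝ 4 (M := W)) (Function.update X i (X j)) := by
    have := map_sum ((ιMulti ℝ 4 (M := W)).toMultilinearMap.toLinearMap X i)
      (fun j : Fin 4 => c j • X j) Finset.univ
    simp only [map_smul, MultilinearMap.toLinearMap_apply] at this
    exact this
  rw [h1, Finset.sum_eq_single i]
  · rw [Function.update_eq_self]
  · intro j _ hj
    rw [(ιMulti ℝ 4 (M := W)).map_eq_zero_of_eq (Function.update X i (X j)) (i := i) (j := j)
      (by simp [Function.update_of_ne hj]) hj.symm, smul_zero]
  · simp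

lemma aux12_indep (X : Fin 4 → W) (h : ιMulti ℝ 4 X ≠ 0) : LinearIndependent ℝ X := by
  rw [linearIndependent_iff']
  intro s g hsum i hi
  by_contra hgi
  set g' : Fin 4 → ℝ := fun j => if j ∈ s then g j else 0 with hg'
  have hsum' : (∑ j : Fin 4, g' j • X j) = 0 := by
    have h1 : (∑ j : Fin 4, g' j • X j) = ∑ j ∈ s, g' j • X j :=
      (Finset.sum_subset (Finset.subset_univ s) (fun x _ hx => by simp [hg', hx])).symm
    rw [h1, show (∑ j ∈ s, g' j • X j) = ∑ j ∈ s, g j • X j from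
      Finset.sum_congr rfl fun x hx => by simp [hg', hx], hsum]
  have h2 := aux12_slot X g' i
  rw [hsum'] at h2
  have h3 : (ιMulti ℝ 4 (M := W)) (Function.update X i 0) = 0 :=
    (ιMulti ℝ 4 (M := W)).toMultilinearMap.map_update_zero X i
  rw [h3] at h2
  have hgi' : g' i = g i := by simp [hg', hi]
  rw [hgi'] at h2
  rcases smul_eq_zero.mp h2.symm with h' | h'
  · exact hgi h'
  · exact h h'

def aux12_fam (F : W [⋀^Fin 4]→ₗ[ℝ] ℝ) : ∀ n, W [⋀^Fin n]→ₗ[ℝ] ℝ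
  | 4 => F
  | _ => 0

lemma aux12_fam_four (F : W [⋀^Fin 4]→ₗ[ℝ] ℝ) : aux12_fam F 4 = F := rfl

lemma aux12_det0 (η : LinearMap.BilinForm ℝ W) (X y : Fin 4 → W) (w s : W)
    (hy : ∀ k j, η (y k) (X j) = if k = j then 1 else 0)
    (hw : ∀ j, η w (X j) = 0) (j' : Fin 4) :
    Matrix.det (Matrix.of fun j k =>
        (![η w, η (y 1), η (y 2), η (y 3)] k) (Function.update X j' s j))
      = if j' = 0 then η w s else 0 := by
  fin_cases j' <;>
    simp [Matrix.det_succ_row_zero, Fin.sum_univ_succ, Function.update, Fin.succAbove,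
      Fin.succ, Fin.castSucc, Fin.castAdd, Fin.castLE, hy, hw]

lemma aux12_det1 (η : LinearMap.BilinForm ℝ W) (X y : Fin 4 → W) (w s : W)
    (hy : ∀ k j, η (y k) (X j) = if k = j then 1 else 0)
    (hw : ∀ j, η w (X j) = 0) (j' : Fin 4) :
    Matrix.det (Matrix.of fun j k =>
        (![η (y 0), η w, η (y 2), η (y 3)] k) (Function.update X j' s j))
      = if j' = 1 then η w s else 0 := by
  fin_cases j' <;>
    simp [Matrix.det_succ_row_zero, Fin.sum_univ_succ, Function.update, Fin.succAbove,
      Fin.succ, Fin.castSucc, Fin.castAdd, Fin.castLE, hy, hw]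

lemma aux12_det2 (η : LinearMap.BilinForm ℝ W) (X y : Fin 4 → W) (w s : W)
    (hy : ∀ k j, η (y k) (X j) = if k = j then 1 else 0)
    (hw : ∀ j, η w (X j) = 0) (j' : Fin 4) :
    Matrix.det (Matrix.of fun j k =>
        (![η (y 0), η (y 1), η w, η (y 3)] k) (Function.update X j' s j))
      = if j' = 2 then η w s else 0 := by
  fin_cases j' <;>
    simp [Matrix.det_succ_row_zero, Fin.sum_univ_succ, Function.update, Fin.succAbove,
      Fin.succ, Fin.castSucc, Fin.castAdd, Fin.castLE, hy, hw]

lemma aux12_det3 (η : LinearMap.BilinForm ℝ W) (X y : Fin 4 → W) (w s : W)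
    (hy : ∀ k j, η (y k) (X j) = if k = j then 1 else 0)
    (hw : ∀ j, η w (X j) = 0) (j' : Fin 4) :
    Matrix.det (Matrix.of fun j k =>
        (![η (y 0), η (y 1), η (y 2), η w] k) (Function.update X j' s j))
      = if j' = 3 then η w s else 0 := by
  fin_cases j' <;>
    simp [Matrix.det_succ_row_zero, Fin.sum_univ_succ, Function.update, Fin.succAbove,
      Fin.succ, Fin.castSucc, Fin.castAdd, Fin.castLE, hy, hw]

end AuxStmt12

set_option maxHeartbeats 4000000 in
open ExteriorAlgebra in
/-- for `φ = x₁∧x₂∧x₃∧x₄` nonzero with `η` nondegenerate on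
`Π = span{x₁,x₂,x₃,x₄}`, an element `A ∈ so(V)` annihilates `φ` iff it preserves both
`Π` and `Π^⊥`. -/
theorem stmt_12
    (η : LinearMap.BilinForm ℝ V) (e : Module.Basis (Fin 11) ℝ V) (he : IsLorentzianBasis V η e)
    (D : Module.End ℝ V → Module.End ℝ (ExteriorAlgebra ℝ V)) (hD : IsDerAction V D)
    (x₁ x₂ x₃ x₄ : V)
    (φ : ExteriorAlgebra ℝ V)
    (hφ : φ = ExteriorAlgebra.ι ℝ x₁ * ExteriorAlgebra.ι ℝ x₂ *
      ExteriorAlgebra.ι ℝ x₃ * ExteriorAlgebra.ι ℝ x₄)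
    (hφ0 : φ ≠ 0)
    (hnd : (η.restrict (Submodule.span ℝ {x₁, x₂, x₃, x₄})).Nondegenerate) :
    ∀ A : Module.End ℝ V, IsSkew V η A →
      (D A φ = 0 ↔
        ((∀ x ∈ Submodule.span ℝ {x₁, x₂, x₃, x₄}, A x ∈ Submodule.span ℝ {x₁, x₂, x₃, x₄}) ∧
         (∀ x ∈ η.orthogonal (Submodule.span ℝ {x₁, x₂, x₃, x₄}),
            A x ∈ η.orthogonal (Submodule.span ℝ {x₁, x₂, x₃, x₄})))) := by
  intro A hskew
  classical
  haveI hfd : FiniteDimensional ℝ V := Module.Finite.of_basis e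
  have heq : ∀ i j, η (e i) (e j) = if i = j then (if (i : ℕ) = 0 then 1 else -1) else 0 := he
  set X : Fin 4 → V := ![x₁, x₂, x₃, x₄] with hXdef
  have hset : ({x₁, x₂, x₃, x₄} : Set V) = Set.range X := by
    ext v
    simp only [Set.mem_insert_iff, Set.mem_singleton_iff, Set.mem_range]
    constructor
    · rintro (rfl | rfl | rfl | rfl)
      exacts [⟨0, rfl⟩, ⟨1, rfl⟩, ⟨2, rfl⟩, ⟨3, rfl⟩]
    · rintro ⟨i, rfl⟩
      fin_cases i <;> simp [hXdef]
  rw [hset] at hnd ⊢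
  set P : Submodule ℝ V := Submodule.span ℝ (Set.range X) with hPdef
  -- symmetry of η
  have hsymm : ∀ v u : V, η v u = η u v := by
    have hflip : η = LinearMap.flip η := by
      apply LinearMap.ext_basis e e
      intro i j
      have hfa : (LinearMap.flip η) (e i) (e j) = η (e j) (e i) := rfl
      rw [hfa, heq i j, heq j i]
      rcases eq_or_ne i j with rfl | hij
      · rfl
      · rw [if_neg hij, if_neg (Ne.symm hij)]
    intro v u
    conv_lhs => rw [hflip]
    rfl
  have hrefl : η.IsRefl := fun v u h => by rw [hsymm]; exact h
  -- nondegeneracy of η on V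
  have hVnd : ∀ q : V, (∀ v : V, η v q = 0) → q = 0 := by
    intro q hq
    have h0 : ∀ j, e.repr q j = 0 := by
      intro j
      have h2 := hq (e j)
      conv_lhs at h2 => rw [← e.sum_repr q]
      rw [map_sum] at h2
      simp only [map_smul, heq, smul_eq_mul] at h2
      rw [Finset.sum_eq_single j] at h2
      · have h2' : (e.repr q) j * (if (j : ℕ) = 0 then (1 : ℝ) else -1) = 0 := by
          simpa using h2
        rcases eq_or_ne ((j : ℕ)) 0 with h3 | h3
        · rw [if_pos h3, mul_one] at h2'
          exact h2'
        · rw [if_neg h3, mul_neg_one, neg_eq_zero] at h2'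
          exact h2'
      · intro b _ hb
        rw [if_neg fun h => hb h.symm, mul_zero]
      · simp
    exact e.repr.injective (by ext j; simp [h0 j])
  have hXmem : ∀ i, X i ∈ P := fun i => Submodule.subset_span ⟨i, rfl⟩
  -- φ as ιMulti, independence, basis
  have hφM : φ = ιMulti ℝ 4 X := by rw [hφ, aux12_prod]
  have hXind : LinearIndependent ℝ X := aux12_indep X (by rw [← hφM]; exact hφ0)
  let bx : Module.Basis (Fin 4) ℝ ↥P := Module.Basis.span hXind
  have hbx : ∀ i, (bx i : V) = X i := fun i => congrArg Subtype.val (Module.Basis.span_apply hXind i)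
  -- dual basis w.r.t. η
  let td := (η.restrict P).toDual hnd
  let yb : Module.Basis (Fin 4) ℝ ↥P := bx.dualBasis.map td.symm
  have hyy : ∀ k j, (η.restrict P) (yb k) (bx j) = if j = k then 1 else 0 := by
    intro k j
    have h1 : yb k = td.symm (bx.dualBasis k) := Module.Basis.map_apply _ _ _
    rw [h1, LinearMap.BilinForm.apply_toDual_symm_apply]
    exact Module.Basis.dualBasis_apply_self _ _ _
  set yv : Fin 4 → V := fun k => ((yb k : ↥P) : V) with hyvdef
  have hy : ∀ k j, η (yv k) (X j) = if k = j then 1 else 0 := by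
    intro k j
    have h1 := hyy k j
    simp only [LinearMap.BilinForm.restrict_apply, LinearMap.domRestrict_apply] at h1
    rw [hbx] at h1
    simp only [hyvdef]
    rcases eq_or_ne k j with rfl | hkj
    · simpa using h1
    · rw [if_neg hkj]
      rw [if_neg (Ne.symm hkj)] at h1
      exact h1
  -- Leibniz expansion of D A φ
  obtain ⟨hι, -, hmul⟩ := hD A
  have hu0 : (![A (X 0), x₂, x₃, x₄] : Fin 4 → V) = Function.update X 0 (A (X 0)) := by
    funext j; fin_cases j <;> simp [hXdef, Function.update]
  have hu1 : (![x₁, A (X 1), x₃, x₄] : Fin 4 → V) = Function.update X 1 (A (X 1)) := by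
    funext j; fin_cases j <;> simp [hXdef, Function.update]
  have hu2 : (![x₁, x₂, A (X 2), x₄] : Fin 4 → V) = Function.update X 2 (A (X 2)) := by
    funext j; fin_cases j <;> simp [hXdef, Function.update]
  have hu3 : (![x₁, x₂, x₃, A (X 3)] : Fin 4 → V) = Function.update X 3 (A (X 3)) := by
    funext j; fin_cases j <;> simp [hXdef, Function.update]
  have hDφ : D A φ = ιMulti ℝ 4 (Function.update X 0 (A (X 0)))
      + ιMulti ℝ 4 (Function.update X 1 (A (X 1)))
      + ιMulti ℝ 4 (Function.update X 2 (A (X 2)))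
      + ιMulti ℝ 4 (Function.update X 3 (A (X 3))) := by
    rw [hφ, hmul (ι ℝ x₁ * ι ℝ x₂ * ι ℝ x₃) (ι ℝ x₄),
      hmul (ι ℝ x₁ * ι ℝ x₂) (ι ℝ x₃), hmul (ι ℝ x₁) (ι ℝ x₂),
      hι x₁, hι x₂, hι x₃, hι x₄]
    simp only [add_mul]
    rw [aux12_prod, aux12_prod, aux12_prod, aux12_prod]
    rw [show A x₁ = A (X 0) from rfl, show A x₂ = A (X 1) from rfl,
      show A x₃ = A (X 2) from rfl, show A x₄ = A (X 3) from rfl]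
    rw [hu0, hu1, hu2, hu3]
  constructor
  · -- forward direction
    intro hA0
    have key : ∀ i : Fin 4, ∀ w : V, (∀ j, η w (X j) = 0) → η w (A (X i)) = 0 := by
      intro i w hw
      fin_cases i
      · set F : V [⋀^Fin 4]→ₗ[ℝ] ℝ := Matrix.detRowAlternating.compLinearMap
          (LinearMap.pi ![η w, η (yv 1), η (yv 2), η (yv 3)]) with hF
        have h0 : ExteriorAlgebra.liftAlternating (aux12_fam F) (D A φ) = 0 := by
          rw [hA0, map_zero]
        rw [hDφ] at h0
        simp only [map_add, liftAlternating_apply_ιMulti, aux12_fam_four] at h0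
        have e0 : F (Function.update X 0 (A (X 0))) = if (0 : Fin 4) = 0 then η w (A (X 0)) else 0 :=
          aux12_det0 η X yv w (A (X 0)) hy hw 0
        have e1 : F (Function.update X 1 (A (X 1))) = if (1 : Fin 4) = 0 then η w (A (X 1)) else 0 :=
          aux12_det0 η X yv w (A (X 1)) hy hw 1
        have e2 : F (Function.update X 2 (A (X 2))) = if (2 : Fin 4) = 0 then η w (A (X 2)) else 0 :=
          aux12_det0 η X yv w (A (X 2)) hy hw 2
        have e3 : F (Function.update X 3 (A (X 3))) = if (3 : Fin 4) = 0 then η w (A (X 3)) else 0 :=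
          aux12_det0 η X yv w (A (X 3)) hy hw 3
        rw [e0, e1, e2, e3] at h0
        simpa using h0
      · set F : V [⋀^Fin 4]→ₗ[ℝ] ℝ := Matrix.detRowAlternating.compLinearMap
          (LinearMap.pi ![η (yv 0), η w, η (yv 2), η (yv 3)]) with hF
        have h0 : ExteriorAlgebra.liftAlternating (aux12_fam F) (D A φ) = 0 := by
          rw [hA0, map_zero]
        rw [hDφ] at h0
        simp only [map_add, liftAlternating_apply_ιMulti, aux12_fam_four] at h0
        have e0 : F (Function.update X 0 (A (X 0))) = if (0 : Fin 4) = 1 then η w (A (X 0)) else 0 :=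
          aux12_det1 η X yv w (A (X 0)) hy hw 0
        have e1 : F (Function.update X 1 (A (X 1))) = if (1 : Fin 4) = 1 then η w (A (X 1)) else 0 :=
          aux12_det1 η X yv w (A (X 1)) hy hw 1
        have e2 : F (Function.update X 2 (A (X 2))) = if (2 : Fin 4) = 1 then η w (A (X 2)) else 0 :=
          aux12_det1 η X yv w (A (X 2)) hy hw 2
        have e3 : F (Function.update X 3 (A (X 3))) = if (3 : Fin 4) = 1 then η w (A (X 3)) else 0 :=
          aux12_det1 η X yv w (A (X 3)) hy hw 3
        rw [e0, e1, e2, e3] at h0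
        simpa using h0
      · set F : V [⋀^Fin 4]→ₗ[ℝ] ℝ := Matrix.detRowAlternating.compLinearMap
          (LinearMap.pi ![η (yv 0), η (yv 1), η w, η (yv 3)]) with hF
        have h0 : ExteriorAlgebra.liftAlternating (aux12_fam F) (D A φ) = 0 := by
          rw [hA0, map_zero]
        rw [hDφ] at h0
        simp only [map_add, liftAlternating_apply_ιMulti, aux12_fam_four] at h0
        have e0 : F (Function.update X 0 (A (X 0))) = if (0 : Fin 4) = 2 then η w (A (X 0)) else 0 :=
          aux12_det2 η X yv w (A (X 0)) hy hw 0
        have e1 : F (Function.update X 1 (A (X 1))) = if (1 : Fin 4) = 2 then η w (A (X 1)) else 0 :=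
          aux12_det2 η X yv w (A (X 1)) hy hw 1
        have e2 : F (Function.update X 2 (A (X 2))) = if (2 : Fin 4) = 2 then η w (A (X 2)) else 0 :=
          aux12_det2 η X yv w (A (X 2)) hy hw 2
        have e3 : F (Function.update X 3 (A (X 3))) = if (3 : Fin 4) = 2 then η w (A (X 3)) else 0 :=
          aux12_det2 η X yv w (A (X 3)) hy hw 3
        rw [e0, e1, e2, e3] at h0
        simpa using h0
      · set F : V [⋀^Fin 4]→ₗ[ℝ] ℝ := Matrix.detRowAlternating.compLinearMap
          (LinearMap.pi ![η (yv 0), η (yv 1), η (yv 2), η w]) with hF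
        have h0 : ExteriorAlgebra.liftAlternating (aux12_fam F) (D A φ) = 0 := by
          rw [hA0, map_zero]
        rw [hDφ] at h0
        simp only [map_add, liftAlternating_apply_ιMulti, aux12_fam_four] at h0
        have e0 : F (Function.update X 0 (A (X 0))) = if (0 : Fin 4) = 3 then η w (A (X 0)) else 0 :=
          aux12_det3 η X yv w (A (X 0)) hy hw 0
        have e1 : F (Function.update X 1 (A (X 1))) = if (1 : Fin 4) = 3 then η w (A (X 1)) else 0 :=
          aux12_det3 η X yv w (A (X 1)) hy hw 1
        have e2 : F (Function.update X 2 (A (X 2))) = if (2 : Fin 4) = 3 then η w (A (X 2)) else 0 :=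
          aux12_det3 η X yv w (A (X 2)) hy hw 2
        have e3 : F (Function.update X 3 (A (X 3))) = if (3 : Fin 4) = 3 then η w (A (X 3)) else 0 :=
          aux12_det3 η X yv w (A (X 3)) hy hw 3
        rw [e0, e1, e2, e3] at h0
        simpa using h0
    -- each A (X i) lies in P
    have compl : IsCompl P (η.orthogonal P) :=
      (LinearMap.BilinForm.restrict_nondegenerate_iff_isCompl_orthogonal hrefl).mp hnd
    have hmemP : ∀ i, A (X i) ∈ P := by
      intro i
      have htop : A (X i) ∈ P ⊔ η.orthogonal P := by
        rw [compl.sup_eq_top]; exact Submodule.mem_top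
      obtain ⟨p, hp, q, hq, hpq⟩ := Submodule.mem_sup.mp htop
      have hq0 : q = 0 := by
        apply hVnd
        intro v
        have hvtop : v ∈ P ⊔ η.orthogonal P := by
          rw [compl.sup_eq_top]; exact Submodule.mem_top
        obtain ⟨p', hp', w', hw', rfl⟩ := Submodule.mem_sup.mp hvtop
        have h4 : η p' q = 0 := LinearMap.BilinForm.mem_orthogonal_iff.mp hq p' hp'
        have hw'X : ∀ j, η w' (X j) = 0 := by
          intro j
          have := LinearMap.BilinForm.mem_orthogonal_iff.mp hw' (X j) (hXmem j)
          rw [hsymm]; exact this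
        have h1 : η w' (A (X i)) = 0 := key i w' hw'X
        have h2 : η w' p = 0 := by
          rw [hsymm]
          exact LinearMap.BilinForm.mem_orthogonal_iff.mp hw' p hp
        have h3 : η w' q = 0 := by
          have h5 : η w' (p + q) = 0 := by rw [hpq]; exact h1
          rw [map_add] at h5
          linarith [h2]
        rw [map_add, LinearMap.add_apply]
        rw [h4, h3, add_zero]
      rw [← hpq, hq0, add_zero]
      exact hp
    have hc1 : ∀ x ∈ P, A x ∈ P := by
      intro v hv
      induction hv using Submodule.span_induction with
      | mem v hv => obtain ⟨i, rfl⟩ := hv; exact hmemP i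
      | zero => simp
      | add v u _ _ hv hu => rw [map_add]; exact P.add_mem hv hu
      | smul a v _ hv => rw [map_smul]; exact P.smul_mem a hv
    refine ⟨hc1, ?_⟩
    intro v hv
    rw [LinearMap.BilinForm.mem_orthogonal_iff]
    intro n hn
    have h1 : A n ∈ P := hc1 n hn
    have h2 : η (A n) v = 0 := LinearMap.BilinForm.mem_orthogonal_iff.mp hv (A n) h1
    have h3 := hskew n v
    linarith
  · -- backward direction
    rintro ⟨h1, -⟩
    let A' : Module.End ℝ ↥P := A.restrict (p := P) (q := P) (fun x hx => h1 x hx)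
    have hAXc : ∀ i, A (X i) = ∑ j : Fin 4, bx.repr (A' (bx i)) j • X j := by
      intro i
      have h2 := bx.sum_repr (A' (bx i))
      have h3 := congrArg (fun z : ↥P => (z : V)) h2
      simp only [AddSubmonoidClass.coe_finset_sum, SetLike.val_smul, hbx] at h3
      have h4 : ((A' (bx i) : ↥P) : V) = A ((bx i : ↥P) : V) := rfl
      rw [h4, hbx i] at h3
      exact h3.symm
    have hs : ∀ i, ιMulti ℝ 4 (Function.update X i
        (∑ j : Fin 4, bx.repr (A' (bx i)) j • X j))
        = bx.repr (A' (bx i)) i • ιMulti ℝ 4 X := by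
      intro i
      exact aux12_slot X (fun j => bx.repr (A' (bx i)) j) i
    -- trace is zero
    have hrepr1 : ∀ (u : ↥P) (k : Fin 4), bx.repr u k = (η.restrict P) (yb k) u := by
      intro u k
      have hcoord : bx.coord k = (η.restrict P) (yb k) := by
        apply bx.ext
        intro j
        rw [Module.Basis.coord_apply, Module.Basis.repr_self, Finsupp.single_apply, hyy]
      rw [← Module.Basis.coord_apply, hcoord]
    have hrepr2 : ∀ (u : ↥P) (k : Fin 4), yb.repr u k = (η.restrict P) (bx k) u := by
      intro u k
      have hcoord : yb.coord k = (η.restrict P) (bx k) := by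
        apply yb.ext
        intro j
        rw [Module.Basis.coord_apply, Module.Basis.repr_self, Finsupp.single_apply]
        have h5 : (η.restrict P) (bx k) (yb j) = (η.restrict P) (yb j) (bx k) := by
          simp only [LinearMap.BilinForm.restrict_apply]
          exact hsymm _ _
        rw [h5, hyy]
        rcases eq_or_ne j k with rfl | hjk
        · simp
        · rw [if_neg hjk, if_neg (Ne.symm hjk)]
      rw [← Module.Basis.coord_apply, hcoord]
    have htrace1 : LinearMap.trace ℝ ↥P A' = ∑ i : Fin 4, bx.repr (A' (bx i)) i := by
      rw [LinearMap.trace_eq_matrix_trace ℝ bx A', Matrix.trace]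
      congr 1
      funext i
      simp [LinearMap.toMatrix_apply, Matrix.diag]
    have htrace2 : LinearMap.trace ℝ ↥P A' = ∑ i : Fin 4, yb.repr (A' (yb i)) i := by
      rw [LinearMap.trace_eq_matrix_trace ℝ yb A', Matrix.trace]
      congr 1
      funext i
      simp [LinearMap.toMatrix_apply, Matrix.diag]
    have hterm : ∀ i, yb.repr (A' (yb i)) i = - bx.repr (A' (bx i)) i := by
      intro i
      rw [hrepr2, hrepr1]
      simp only [LinearMap.BilinForm.restrict_apply, LinearMap.domRestrict_apply]
      have hA'1 : ((A' (yb i) : ↥P) : V) = A ((yb i : ↥P) : V) := rfl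
      have hA'2 : ((A' (bx i) : ↥P) : V) = A ((bx i : ↥P) : V) := rfl
      rw [hA'1, hA'2]
      have h6 := hskew ((bx i : V)) ((yb i : V))
      have h7 : η ((yb i : V)) (A ((bx i : V))) = η (A ((bx i : V))) ((yb i : V)) := hsymm _ _
      linarith
    have htr : (∑ i : Fin 4, bx.repr (A' (bx i)) i) = 0 := by
      have h8 : (∑ i : Fin 4, yb.repr (A' (yb i)) i)
          = - ∑ i : Fin 4, bx.repr (A' (bx i)) i := by
        rw [Finset.sum_congr rfl (fun i _ => hterm i), Finset.sum_neg_distrib]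
      rw [htrace1] at htrace2
      rw [h8] at htrace2
      linarith
    rw [hDφ, hAXc 0, hAXc 1, hAXc 2, hAXc 3, hs 0, hs 1, hs 2, hs 3, ← hφM]
    have h9 : bx.repr (A' (bx 0)) 0 • φ + bx.repr (A' (bx 1)) 1 • φ
        + bx.repr (A' (bx 2)) 2 • φ + bx.repr (A' (bx 3)) 3 • φ
        = (∑ i : Fin 4, bx.repr (A' (bx i)) i) • φ := by
      rw [Fin.sum_univ_four, add_smul, add_smul, add_smul]
    rw [h9, htr, zero_smul]
end
end

section
/- For each p ∈ {1, 2, 5}: if a p-form ζ ∈ ΛᵖV satisfies ⟨s, ρ(ζ̂)s⟩ = 0 for all s ∈ S, then ζ = 0. -/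
noncomputable section

variable (V : Type) [AddCommGroup V] [Module ℝ V]

/-- `hat η θ` is the image of `θ ∈ ΛV` under the inverse of the canonical linear
isomorphism `Cl(V) ≅ ΛV` (Mathlib's `CliffordAlgebra.equivExterior`). -/
def hat (η : LinearMap.BilinForm ℝ V) (θ : ExteriorAlgebra ℝ V) : CliffordAlgebra (Qf V η) :=
  (CliffordAlgebra.equivExterior (Qf V η)).symm θ

namespace Stmt14

open CliffordAlgebra

variable {V} (η : LinearMap.BilinForm ℝ V) (e : Module.Basis (Fin 11) ℝ V)

/-- Clifford monomial over a list of basis indices. -/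
def γC (L : List (Fin 11)) : CliffordAlgebra (Qf V η) :=
  (L.map fun i => ι (Qf V η) (e i)).prod

/-- Exterior monomial over a list of basis indices. -/
def wE (L : List (Fin 11)) : ExteriorAlgebra ℝ V :=
  (L.map fun i => ExteriorAlgebra.ι ℝ (e i)).prod

@[simp] lemma γC_nil : γC η e [] = 1 := rfl
@[simp] lemma γC_cons (i : Fin 11) (L : List (Fin 11)) :
    γC η e (i :: L) = ι (Qf V η) (e i) * γC η e L := by
  simp [γC]

@[simp] lemma wE_nil : wE e [] = 1 := rfl
@[simp] lemma wE_cons (i : Fin 11) (L : List (Fin 11)) :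
    wE e (i :: L) = ExteriorAlgebra.ι ℝ (e i) * wE e L := by
  simp [wE]

lemma γC_append (L M : List (Fin 11)) : γC η e (L ++ M) = γC η e L * γC η e M := by
  simp [γC]

variable {η e} (he : IsLorentzianBasis V η e)
include he

lemma Qval (i : Fin 11) : (Qf V η) (e i) = if (i : ℕ) = 0 then (-1 : ℝ) else 1 := by
  have h := he i i
  rw [if_pos rfl] at h
  simp only [Qf, LinearMap.BilinMap.toQuadraticMap_apply, LinearMap.neg_apply]
  rw [h]
  by_cases hi : (i : ℕ) = 0 <;> simp [hi]

lemma Qval_ne_zero (i : Fin 11) : (Qf V η) (e i) ≠ 0 := by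
  rw [Qval he i]; split <;> norm_num

lemma polar_eq_zero {i j : Fin 11} (h : i ≠ j) :
    QuadraticMap.polar (Qf V η) (e i) (e j) = 0 := by
  have h1 := he i j
  have h2 := he j i
  rw [if_neg h] at h1
  rw [if_neg (Ne.symm h)] at h2
  simp only [QuadraticMap.polar, Qf, LinearMap.BilinMap.toQuadraticMap_apply]
  simp only [LinearMap.neg_apply, map_add, LinearMap.add_apply]
  rw [h1, h2]; ring

lemma isOrtho {i j : Fin 11} (h : i ≠ j) : (Qf V η).IsOrtho (e i) (e j) := by
  have := polar_eq_zero he h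
  simp only [QuadraticMap.polar] at this
  unfold QuadraticMap.IsOrtho
  linarith [this]

lemma anticomm {i j : Fin 11} (h : i ≠ j) :
    ι (Qf V η) (e i) * ι (Qf V η) (e j) = -(ι (Qf V η) (e j) * ι (Qf V η) (e i)) :=
  ι_mul_ι_comm_of_isOrtho (isOrtho he h)

/-- moving a generator across a monomial not containing it -/
lemma move_past (i : Fin 11) :
    ∀ L : List (Fin 11), i ∉ L →
      ι (Qf V η) (e i) * γC η e L = ((-1 : ℝ) ^ L.length) • (γC η e L * ι (Qf V η) (e i))
  | [], _ => by simp
  | j :: L, hmem => by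
    have hij : i ≠ j := fun h => hmem (h ▸ List.mem_cons_self)
    have hL : i ∉ L := fun h => hmem (List.mem_cons_of_mem _ h)
    rw [γC_cons, ← mul_assoc, anticomm he hij, neg_mul, mul_assoc,
      move_past i L hL, mul_smul_comm, ← neg_smul]
    simp only [List.length_cons, mul_assoc]
    congr 1
    ring

omit he in
lemma pm_mul {a b : ℝ} (ha : a = 1 ∨ a = -1) (hb : b = 1 ∨ b = -1) :
    a * b = 1 ∨ a * b = -1 := by
  rcases ha with rfl | rfl <;> rcases hb with rfl | rfl <;> norm_num

omit he in
lemma neg_pow_pm (n : ℕ) : (-1 : ℝ) ^ n = 1 ∨ (-1 : ℝ) ^ n = -1 := by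
  rcases Nat.even_or_odd n with h | h
  · left; exact Even.neg_one_pow h
  · right; exact Odd.neg_one_pow h

lemma Qval_pm (j : Fin 11) : (Qf V η) (e j) = 1 ∨ (Qf V η) (e j) = -1 := by
  rw [Qval he j]; by_cases hj : (j : ℕ) = 0 <;> simp [hj]

omit he in
/-- `ι (e i) ^ 2` as a scalar action -/
lemma sq_gen (i : Fin 11) :
    ι (Qf V η) (e i) * ι (Qf V η) (e i) = ((Qf V η) (e i)) • (1 : CliffordAlgebra (Qf V η)) := by
  rw [ι_sq_scalar, Algebra.algebraMap_eq_smul_one]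

/-- reversed form of `move_past` -/
lemma move_past' (i : Fin 11) (L : List (Fin 11)) (h : i ∉ L) :
    γC η e L * ι (Qf V η) (e i) = ((-1 : ℝ) ^ L.length) • (ι (Qf V η) (e i) * γC η e L) := by
  rw [move_past he i L h, smul_smul, ← pow_add, Even.neg_one_pow ⟨L.length, by ring⟩, one_smul]

/-- moving a generator across a monomial containing it exactly once -/
lemma move_past_mem {j : Fin 11} : ∀ {L : List (Fin 11)}, j ∈ L → L.Nodup →
    ι (Qf V η) (e j) * γC η e L = ((-1 : ℝ) ^ (L.length + 1)) • (γC η e L * ι (Qf V η) (e j))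
  | [], hm, _ => absurd hm List.not_mem_nil
  | k :: L, hm, hnd => by
    rw [List.nodup_cons] at hnd
    by_cases hjk : j = k
    · subst hjk
      have hjL : j ∉ L := hnd.1
      rw [γC_cons, ← mul_assoc, sq_gen]
      calc ((Qf V η) (e j)) • (1 : CliffordAlgebra (Qf V η)) * γC η e L
          = ((Qf V η) (e j)) • γC η e L := by rw [smul_mul_assoc, one_mul]
        _ = ((-1:ℝ) ^ ((j :: L).length + 1)) •
              ((ι (Qf V η) (e j) * γC η e L) * ι (Qf V η) (e j)) := by
            rw [mul_assoc, move_past' he j L hjL, mul_smul_comm, ← mul_assoc, sq_gen,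
              smul_mul_assoc, one_mul, smul_smul, smul_smul]
            congr 1
            rw [List.length_cons, mul_comm]
            rw [← pow_add, Even.neg_one_pow ⟨L.length + 1, by ring⟩, mul_one]
    · have hjL : j ∈ L := (List.mem_cons.mp hm).resolve_left hjk
      rw [γC_cons, ← mul_assoc, anticomm he hjk, neg_mul, mul_assoc,
        move_past_mem hjL hnd.2, mul_smul_comm, ← neg_smul]
      rw [List.length_cons]
      rw [show (-((-1:ℝ) ^ (L.length + 1))) = (-1:ℝ) ^ (L.length + 1 + 1) by ring]
      rw [mul_assoc]

/-- square of a monomial with distinct indices is ±1 -/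
lemma monomial_sq : ∀ L : List (Fin 11), L.Nodup →
    ∃ ε : ℝ, (ε = 1 ∨ ε = -1) ∧ γC η e L * γC η e L = ε • 1
  | [], _ => ⟨1, Or.inl rfl, by simp⟩
  | j :: L, hnd => by
    rw [List.nodup_cons] at hnd
    obtain ⟨ε, hε, hsq⟩ := monomial_sq L hnd.2
    refine ⟨(-1 : ℝ) ^ L.length * ((Qf V η) (e j) * ε), pm_mul (neg_pow_pm _)
      (pm_mul (Qval_pm he j) hε), ?_⟩
    rw [γC_cons]
    calc ι (Qf V η) (e j) * γC η e L * (ι (Qf V η) (e j) * γC η e L)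
        = ι (Qf V η) (e j) * (γC η e L * ι (Qf V η) (e j)) * γC η e L := by
          rw [mul_assoc, mul_assoc, mul_assoc]
      _ = ((-1:ℝ) ^ L.length) • (ι (Qf V η) (e j) * (ι (Qf V η) (e j) * γC η e L) * γC η e L) := by
          rw [move_past' he j L hnd.1, mul_smul_comm, smul_mul_assoc]
      _ = ((-1:ℝ) ^ L.length) • (((Qf V η) (e j)) • (1:CliffordAlgebra (Qf V η)) *
            (γC η e L * γC η e L)) := by
          rw [← mul_assoc, ← mul_assoc, sq_gen, mul_assoc]
      _ = ((-1 : ℝ) ^ L.length * ((Qf V η) (e j) * ε)) • 1 := by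
          rw [hsq, smul_mul_assoc, one_mul, smul_smul, smul_smul, mul_assoc]

lemma conj_sign {j : Fin 11} {L I : List (Fin 11)} (hL : L.Nodup) (hI : I.Nodup)
    (hlen : L.length = I.length)
    (hj : (j ∈ L ∧ j ∉ I) ∨ (j ∉ L ∧ j ∈ I)) :
    ι (Qf V η) (e j) * (γC η e L * γC η e I) = -((γC η e L * γC η e I) * ι (Qf V η) (e j)) := by
  rcases hj with ⟨hjL, hjI⟩ | ⟨hjL, hjI⟩
  · rw [← mul_assoc, move_past_mem he hjL hL, smul_mul_assoc, mul_assoc,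
      move_past he j I hjI, mul_smul_comm, smul_smul, ← mul_assoc]
    rw [show ((-1:ℝ) ^ (L.length + 1) * (-1:ℝ) ^ I.length) = -1 by
      rw [← pow_add, hlen]; exact Odd.neg_one_pow ⟨I.length, by ring⟩]
    exact neg_one_smul ℝ _
  · rw [← mul_assoc, move_past he j L hjL, smul_mul_assoc, mul_assoc,
      move_past_mem he hjI hI, mul_smul_comm, smul_smul, ← mul_assoc]
    rw [show ((-1:ℝ) ^ L.length * (-1:ℝ) ^ (I.length + 1)) = -1 by
      rw [← pow_add, hlen]; exact Odd.neg_one_pow ⟨I.length, by ring⟩]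
    exact neg_one_smul ℝ _

section Trace

variable {S : Type} [AddCommGroup S] [Module ℝ S] [Module.Finite ℝ S]
  (ρ : CliffordAlgebra (Qf V η) →ₐ[ℝ] Module.End ℝ S)

omit he in
omit [Module.Finite ℝ S] in
lemma trace_zero_of_anticomm {A U : Module.End ℝ S} {q : ℝ} (hq : q ≠ 0)
    (hU : U * U = q • 1) (hUA : U * A = -(A * U)) : LinearMap.trace ℝ S A = 0 := by
  have h1 : LinearMap.trace ℝ S (U * A * U) = q * LinearMap.trace ℝ S A := by
    rw [LinearMap.trace_mul_comm, ← mul_assoc, hU, smul_mul_assoc, one_mul, map_smul,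
      smul_eq_mul]
  have h2 : LinearMap.trace ℝ S (U * A * U) = -(q * LinearMap.trace ℝ S A) := by
    rw [hUA, neg_mul, mul_assoc, hU, mul_smul_comm, mul_one, map_neg, map_smul, smul_eq_mul]
  have h3 := h1.symm.trans h2
  rcases mul_eq_zero.mp (by linarith : q * LinearMap.trace ℝ S A = 0) with h | h
  · exact absurd h hq
  · exact h

lemma trace_monomial_zero {L I : List (Fin 11)} (hL : L.Nodup) (hI : I.Nodup)
    (hlen : L.length = I.length) {j : Fin 11}
    (hj : (j ∈ L ∧ j ∉ I) ∨ (j ∉ L ∧ j ∈ I)) :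
    LinearMap.trace ℝ S (ρ (γC η e L * γC η e I)) = 0 := by
  apply trace_zero_of_anticomm (U := ρ (ι (Qf V η) (e j))) (q := (Qf V η) (e j))
    (Qval_ne_zero he j)
  · rw [← map_mul, sq_gen, map_smul, map_one]
  · rw [← map_mul, conj_sign he hL hI hlen hj, map_neg, map_mul]

lemma trace_monomial_self (hdimS : Module.finrank ℝ S = 32) {L : List (Fin 11)} (hL : L.Nodup) :
    ∃ ε : ℝ, (ε = 1 ∨ ε = -1) ∧
      LinearMap.trace ℝ S (ρ (γC η e L * γC η e L)) = ε * 32 := by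
  obtain ⟨ε, hε, hsq⟩ := monomial_sq he L hL
  refine ⟨ε, hε, ?_⟩
  rw [hsq, map_smul, map_one, map_smul, LinearMap.trace_one, hdimS, smul_eq_mul]
  norm_num

end Trace

section Hat

omit he in
lemma contract_monomial (d : Module.Dual ℝ V) :
    ∀ L : List (Fin 11), (∀ j ∈ L, d (e j) = 0) →
      contractLeft (Q := Qf V η) d (γC η e L) = 0
  | [], _ => by simp [contractLeft_one]
  | i :: L, h => by
    rw [γC_cons, contractLeft_ι_mul, h i (List.mem_cons_self),
      contract_monomial d L (fun j hj => h j (List.mem_cons_of_mem _ hj))]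
    simp

omit he in
lemma hat_eq (θ : ExteriorAlgebra ℝ V) :
    hat V η θ = changeForm
      (changeForm.neg_proof (changeForm.associated_neg_proof (Q := Qf V η))) θ := rfl

lemma hat_monomial : ∀ L : List (Fin 11), L.Nodup → hat V η (wE e L) = γC η e L
  | [], _ => by rw [wE_nil, γC_nil, hat_eq, changeForm_one]
  | i :: L, hnd => by
    rw [List.nodup_cons] at hnd
    rw [wE_cons, γC_cons, hat_eq]
    rw [changeForm_ι_mul]
    rw [← hat_eq, hat_monomial L hnd.2]
    have hc : contractLeft (Q := Qf V η)
        ((-(QuadraticMap.associated (R := ℝ) (-(Qf V η)))) (e i)) (γC η e L) = 0 := by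
      apply contract_monomial
      intro j hj
      have hij : i ≠ j := fun h => hnd.1 (h ▸ hj)
      have h1 : (-(Qf V η)) (e i + e j) - (-(Qf V η)) (e i) - (-(Qf V η)) (e j)
          = -(QuadraticMap.polar (Qf V η) (e i) (e j)) := by
        simp [QuadraticMap.polar]; ring
      simp only [LinearMap.neg_apply, QuadraticMap.associated_apply, h1,
        polar_eq_zero he hij]
      simp
    rw [hc, sub_zero]

end Hat

/-- the sign `(-1) ^ (n * (n-1) / 2)`, defined recursively -/
def rsign : ℕ → ℝ
  | 0 => 1
  | n + 1 => rsign n * (-1 : ℝ) ^ n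

lemma reverse_monomial : ∀ L : List (Fin 11), L.Nodup →
    γC η e L.reverse = rsign L.length • γC η e L
  | [], _ => by simp [rsign]
  | a :: L, hnd => by
    rw [List.nodup_cons] at hnd
    rw [List.reverse_cons, γC_append, reverse_monomial L hnd.2, γC_cons]
    rw [smul_mul_assoc, γC_nil, mul_one, move_past' he a L hnd.1, smul_smul,
      List.length_cons, γC_cons]
    rfl

section Omega

variable {S : Type} [AddCommGroup S] [Module ℝ S]
  (ρ : CliffordAlgebra (Qf V η) →ₐ[ℝ] Module.End ℝ S)
  (ω : LinearMap.BilinForm ℝ S)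
  (hωι : ∀ (v : V) (s t : S),
    ω (ρ (ι (Qf V η) v) s) t = - ω s (ρ (ι (Qf V η) v) t))
include hωι

omit he in
lemma omega_monomial : ∀ (L : List (Fin 11)) (s t : S),
    ω (ρ (γC η e L) s) t = ((-1 : ℝ) ^ L.length) * ω s (ρ (γC η e L.reverse) t)
  | [], s, t => by simp
  | a :: L, s, t => by
    rw [γC_cons, map_mul, Module.End.mul_apply, hωι, omega_monomial L,
      List.reverse_cons, γC_append, map_mul, Module.End.mul_apply]
    rw [show γC η e [a] = ι (Qf V η) (e a) * 1 by simp, mul_one, List.length_cons, pow_succ]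
    ring

lemma omega_monomial_skew {L : List (Fin 11)} (hnd : L.Nodup)
    (hsgn : ((-1 : ℝ) ^ L.length) * rsign L.length = -1) (s t : S) :
    ω (ρ (γC η e L) s) t = - ω s (ρ (γC η e L) t) := by
  rw [omega_monomial ρ ω hωι L, reverse_monomial he L hnd, map_smul, LinearMap.smul_apply,
    map_smul, smul_eq_mul, ← mul_assoc, hsgn]
  ring

end Omega

section Span

open Submodule

omit he
variable (e)

/-- sorted exterior monomials of length `n` -/
def SpanSet (n : ℕ) : Set (ExteriorAlgebra ℝ V) :=
  {x | ∃ M : List (Fin 11), M.Pairwise (· < ·) ∧ M.length = n ∧ x = wE e M}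

lemma ext_anticomm (v w : V) :
    ExteriorAlgebra.ι ℝ v * ExteriorAlgebra.ι ℝ w = -(ExteriorAlgebra.ι ℝ w *
      ExteriorAlgebra.ι ℝ v) :=
  eq_neg_of_add_eq_zero_left (ExteriorAlgebra.ι_add_mul_swap v w)

lemma key_mul (i : Fin 11) : ∀ L : List (Fin 11), L.Pairwise (· < ·) →
    ExteriorAlgebra.ι ℝ (e i) * wE e L ∈ span ℝ
      {x | ∃ M : List (Fin 11), M.Pairwise (· < ·) ∧ M.length = L.length + 1 ∧
        (∀ y ∈ M, y = i ∨ y ∈ L) ∧ x = wE e M}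
  | [], _ => subset_span ⟨[i], by simp, by simp, by simp, by simp⟩
  | j :: L, hsort => by
    rw [List.pairwise_cons] at hsort
    obtain ⟨hj, hL⟩ := hsort
    rcases lt_trichotomy i j with hij | hij | hij
    · refine subset_span ⟨i :: j :: L, ?_, by simp, ?_, by simp⟩
      · rw [List.pairwise_cons]
        refine ⟨?_, List.pairwise_cons.mpr ⟨hj, hL⟩⟩
        intro b hb
        rcases List.mem_cons.mp hb with rfl | hb
        · exact hij
        · exact hij.trans (hj b hb)
      · intro y hy
        rcases List.mem_cons.mp hy with rfl | hy
        · exact Or.inl rfl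
        · exact Or.inr hy
    · subst hij
      rw [wE_cons, ← mul_assoc, ExteriorAlgebra.ι_sq_zero, zero_mul]
      exact zero_mem _
    · -- j < i : anticommute and recurse
      have hrec := key_mul i L hL
      have hstep : ∀ x ∈ span ℝ
          {x | ∃ M : List (Fin 11), M.Pairwise (· < ·) ∧ M.length = L.length + 1 ∧
            (∀ y ∈ M, y = i ∨ y ∈ L) ∧ x = wE e M},
          ExteriorAlgebra.ι ℝ (e j) * x ∈ span ℝ
            {x | ∃ M : List (Fin 11), M.Pairwise (· < ·) ∧ M.length = (j :: L).length + 1 ∧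
              (∀ y ∈ M, y = i ∨ y ∈ j :: L) ∧ x = wE e M} := by
        intro x hx
        induction hx using Submodule.span_induction with
        | mem x hxm =>
          obtain ⟨M, hMs, hMl, hMsub, rfl⟩ := hxm
          refine subset_span ⟨j :: M, ?_, by simp [hMl], ?_, by simp⟩
          · rw [List.pairwise_cons]
            refine ⟨?_, hMs⟩
            intro b hb
            rcases hMsub b hb with rfl | hbL
            · exact hij
            · exact hj b hbL
          · intro y hy
            rcases List.mem_cons.mp hy with rfl | hy
            · exact Or.inr (List.mem_cons_self)
            · rcases hMsub y hy with rfl | hyL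
              · exact Or.inl rfl
              · exact Or.inr (List.mem_cons_of_mem _ hyL)
        | zero => rw [mul_zero]; exact zero_mem _
        | add x y _ _ hx hy => rw [mul_add]; exact add_mem hx hy
        | smul a x _ hx => rw [mul_smul_comm]; exact smul_mem _ _ hx
      rw [wE_cons, ← mul_assoc, ext_anticomm, neg_mul, mul_assoc]
      exact neg_mem (hstep _ hrec)

lemma mem_span_sorted {p : ℕ} {ζ : ExteriorAlgebra ℝ V} (hζ : ζ ∈ ⋀[ℝ]^p V) :
    ζ ∈ span ℝ (SpanSet e p) := by
  refine Submodule.pow_induction_on_left'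
    (M := LinearMap.range (ExteriorAlgebra.ι ℝ : V →ₗ[ℝ] ExteriorAlgebra ℝ V))
    (C := fun n x _ => x ∈ span ℝ (SpanSet e n)) ?_ ?_ ?_ hζ
  · intro r
    rw [Algebra.algebraMap_eq_smul_one]
    exact smul_mem _ _ (subset_span ⟨[], by simp, rfl, by simp⟩)
  · intro x y i hx hy ihx ihy
    exact add_mem ihx ihy
  · rintro m ⟨v, rfl⟩ n x hx ih
    clear hx
    induction ih using Submodule.span_induction with
    | mem x hxm =>
      obtain ⟨M, hMs, hMl, rfl⟩ := hxm
      have hv : ExteriorAlgebra.ι ℝ v * wE e M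
          = ∑ k : Fin 11, (e.repr v k) • (ExteriorAlgebra.ι ℝ (e k) * wE e M) := by
        conv_lhs => rw [← e.sum_repr v]
        rw [map_sum, Finset.sum_mul]
        congr 1
        ext k
        rw [map_smul, smul_mul_assoc]
      rw [hv]
      refine sum_mem fun k _ => smul_mem _ _ ?_
      refine span_le.mpr ?_ (key_mul e k M hMs)
      rintro x ⟨M', hM's, hM'l, _, rfl⟩
      exact subset_span ⟨M', hM's, by omega, rfl⟩
    | zero => rw [mul_zero]; exact zero_mem _
    | add x y _ _ hx hy => rw [mul_add]; exact add_mem hx hy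
    | smul a x _ hx => rw [mul_smul_comm]; exact smul_mem _ _ hx

/-- the canonical monomial attached to a `p`-subset -/
def fm (p : ℕ) (I : {I : Finset (Fin 11) // I.card = p}) : ExteriorAlgebra ℝ V :=
  wE e (Finset.sort I.1 (· ≤ ·))

lemma exists_expansion {p : ℕ} {ζ : ExteriorAlgebra ℝ V} (hζ : ζ ∈ ⋀[ℝ]^p V) :
    ∃ c : {I : Finset (Fin 11) // I.card = p} → ℝ,
      ∑ I, c I • fm e p I = ζ := by
  rw [← mem_span_range_iff_exists_fun ℝ]
  refine span_le.mpr ?_ (mem_span_sorted e hζ)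
  rintro x ⟨M, hMs, hMl, rfl⟩
  have hnd : M.Nodup := hMs.nodup
  have hcard : M.toFinset.card = p := by rw [List.toFinset_card_of_nodup hnd, hMl]
  apply subset_span
  refine ⟨⟨M.toFinset, hcard⟩, ?_⟩
  unfold fm
  congr 1
  exact (List.toFinset_sort (· ≤ ·) hnd).mpr (hMs.imp le_of_lt)

end Span

section Core

variable {S : Type} [AddCommGroup S] [Module ℝ S]
  (hdimS : Module.finrank ℝ S = 32)
  (ρ : CliffordAlgebra (Qf V η) →ₐ[ℝ] Module.End ℝ S)
  (ω : LinearMap.BilinForm ℝ S) (hω_alt : ∀ s : S, ω s s = 0)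
  (hω_nd : ω.Nondegenerate)
  (hωι : ∀ (v : V) (s t : S),
    ω (ρ (ι (Qf V η) v) s) t = - ω s (ρ (ι (Qf V η) v) t))

include hdimS hω_alt hω_nd hωι

lemma core {p : ℕ} (hsgn : ((-1 : ℝ) ^ p) * rsign p = -1) :
    ∀ ζ ∈ ⋀[ℝ]^p V, (∀ s : S, ω s (ρ (hat V η ζ) s) = 0) → ζ = 0 := by
  intro ζ hζ h0
  obtain ⟨c, hc⟩ := exists_expansion e hζ
  have hnod : ∀ I : {I : Finset (Fin 11) // I.card = p}, (Finset.sort I.1 (· ≤ ·)).Nodup :=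
    fun I => Finset.sort_nodup _ _
  have hlen : ∀ I : {I : Finset (Fin 11) // I.card = p},
      (Finset.sort I.1 (· ≤ ·)).length = p :=
    fun I => by rw [Finset.length_sort, I.2]
  have hhat : ρ (hat V η ζ) = ∑ I : {I : Finset (Fin 11) // I.card = p},
      c I • ρ (γC η e (Finset.sort I.1 (· ≤ ·))) := by
    rw [← hc]
    have h1 : hat V η (∑ I : {I : Finset (Fin 11) // I.card = p}, c I • fm e p I)
        = ∑ I : {I : Finset (Fin 11) // I.card = p},
            c I • γC η e (Finset.sort I.1 (· ≤ ·)) := by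
      unfold hat
      rw [map_sum]
      refine Finset.sum_congr rfl fun I _ => ?_
      rw [map_smul]
      congr 1
      exact hat_monomial he _ (hnod I)
    rw [h1, map_sum]
    exact Finset.sum_congr rfl fun I _ => by rw [map_smul]
  have hXskew : ∀ s t : S, ω (ρ (hat V η ζ) s) t = - ω s (ρ (hat V η ζ) t) := by
    intro s t
    have e1 : ω (ρ (hat V η ζ) s) t = ∑ I : {I : Finset (Fin 11) // I.card = p},
        c I * ω (ρ (γC η e (Finset.sort I.1 (· ≤ ·))) s) t := by
      rw [hhat]
      simp [LinearMap.sum_apply, LinearMap.smul_apply, map_sum, smul_eq_mul]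
    have e2 : ω s (ρ (hat V η ζ) t) = ∑ I : {I : Finset (Fin 11) // I.card = p},
        c I * ω s (ρ (γC η e (Finset.sort I.1 (· ≤ ·))) t) := by
      rw [hhat]
      simp [LinearMap.sum_apply, LinearMap.smul_apply, map_sum, smul_eq_mul]
    rw [e1, e2, ← Finset.sum_neg_distrib]
    refine Finset.sum_congr rfl fun I _ => ?_
    rw [omega_monomial_skew he ρ ω hωι (hnod I) (by rw [hlen I]; exact hsgn) s t]
    ring
  have hskew : ∀ s t : S, ω s t = - ω t s := by
    intro s t
    have h := hω_alt (s + t)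
    simp only [map_add, LinearMap.add_apply, hω_alt s, hω_alt t] at h
    linarith
  have hzero : ∀ t, ρ (hat V η ζ) t = 0 := by
    intro t
    apply hω_nd.1
    intro n
    have hsym : ω n (ρ (hat V η ζ) t) = ω t (ρ (hat V η ζ) n) := by
      have ha := hXskew n t
      linarith [hskew (ρ (hat V η ζ) n) t]
    have h1 : ω n (ρ (hat V η ζ) t) = 0 := by
      have hp1 := h0 (n + t)
      have e1 : ω (n + t) ((ρ (hat V η ζ)) (n + t))
          = ω n (ρ (hat V η ζ) n) + ω n (ρ (hat V η ζ) t)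
            + (ω t (ρ (hat V η ζ) n) + ω t (ρ (hat V η ζ) t)) := by
        simp only [map_add, LinearMap.add_apply]
        ring
      rw [e1, h0 n, h0 t] at hp1
      linarith
    have h2 := hskew (ρ (hat V η ζ) t) n
    rw [h1] at h2
    rw [h2, neg_zero]
  have hX0 : ρ (hat V η ζ) = 0 := LinearMap.ext hzero
  have hFD : Module.Finite ℝ S := Module.finite_of_finrank_pos (by rw [hdimS]; norm_num)
  have hcJ : ∀ J : {I : Finset (Fin 11) // I.card = p}, c J = 0 := by
    intro J
    have htr : LinearMap.trace ℝ S
        (ρ (γC η e (Finset.sort J.1 (· ≤ ·))) * ρ (hat V η ζ)) = 0 := by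
      rw [hX0, mul_zero, map_zero]
    have hexp : ρ (γC η e (Finset.sort J.1 (· ≤ ·))) * ρ (hat V η ζ)
        = ∑ I : {I : Finset (Fin 11) // I.card = p},
            c I • ρ (γC η e (Finset.sort J.1 (· ≤ ·))
              * γC η e (Finset.sort I.1 (· ≤ ·))) := by
      rw [hhat, Finset.mul_sum]
      exact Finset.sum_congr rfl fun I _ => by rw [mul_smul_comm, ← map_mul]
    rw [hexp, map_sum] at htr
    simp only [map_smul, smul_eq_mul] at htr
    obtain ⟨ε, hε, hεtr⟩ := trace_monomial_self he ρ hdimS (hnod J)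
    have hsingle : ∑ I : {I : Finset (Fin 11) // I.card = p},
        c I * (LinearMap.trace ℝ S)
          (ρ (γC η e (Finset.sort J.1 (· ≤ ·)) * γC η e (Finset.sort I.1 (· ≤ ·))))
        = c J * (ε * 32) := by
      rw [Finset.sum_eq_single J]
      · rw [hεtr]
      · intro I _ hIJ
        have hne : J.1 ≠ I.1 := fun h => hIJ (Subtype.ext h.symm)
        have hj : ∃ j, (j ∈ Finset.sort J.1 (· ≤ ·) ∧ j ∉ Finset.sort I.1 (· ≤ ·))
            ∨ (j ∉ Finset.sort J.1 (· ≤ ·) ∧ j ∈ Finset.sort I.1 (· ≤ ·)) := by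
          by_contra hcon
          push_neg at hcon
          apply hne
          ext a
          have h1 := hcon a
          constructor
          · intro ha
            exact (Finset.mem_sort (· ≤ ·)).mp
              (h1.1 ((Finset.mem_sort (· ≤ ·)).mpr ha))
          · intro ha
            by_contra hb
            exact h1.2 (fun hc2 => hb ((Finset.mem_sort (· ≤ ·)).mp hc2))
              ((Finset.mem_sort (· ≤ ·)).mpr ha)
        obtain ⟨j, hj⟩ := hj
        rw [trace_monomial_zero he ρ (hnod J) (hnod I) (by rw [hlen, hlen]) hj, mul_zero]
      · intro h; exact absurd (Finset.mem_univ J) h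
    rw [hsingle] at htr
    rcases hε with rfl | rfl <;> linarith
  rw [← hc]
  exact Finset.sum_eq_zero fun I _ => by rw [hcJ I, zero_smul]

end Core

end Stmt14
/-- for `p ∈ {1,2,5}`, a `p`-form `ζ` with `⟨s, ρ(ζ̂)s⟩ = 0` for all
spinors `s` vanishes. -/
theorem stmt_14
    (η : LinearMap.BilinForm ℝ V) (e : Module.Basis (Fin 11) ℝ V) (he : IsLorentzianBasis V η e)
    (S : Type) [AddCommGroup S] [Module ℝ S] (hdimS : Module.finrank ℝ S = 32)
    (ρ : CliffordAlgebra (Qf V η) →ₐ[ℝ] Module.End ℝ S) (hρ : Function.Surjective ρ)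
    (hvol : ρ ((List.ofFn fun i => CliffordAlgebra.ι (Qf V η) (e i)).prod) = -1)
    (ω : LinearMap.BilinForm ℝ S) (hω_alt : ∀ s : S, ω s s = 0)
    (hω_nd : ω.Nondegenerate)
    (hωι : ∀ (v : V) (s t : S),
      ω (ρ (CliffordAlgebra.ι (Qf V η) v) s) t = - ω s (ρ (CliffordAlgebra.ι (Qf V η) v) t))
    :
    ∀ p : ℕ, (p = 1 ∨ p = 2 ∨ p = 5) →
      ∀ ζ ∈ ⋀[ℝ]^p V, (∀ s : S, ω s (ρ (hat V η ζ) s) = 0) → ζ = 0 := by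
  intro p hp ζ hζ h0
  have hsgn : ((-1 : ℝ) ^ p) * Stmt14.rsign p = -1 := by
    rcases hp with rfl | rfl | rfl <;> norm_num [Stmt14.rsign]
  exact Stmt14.core he hdimS ρ ω hω_alt hω_nd hωι hsgn ζ hζ h0
end
end

section
/- For every s ∈ S, the Dirac current v = κ(s,s) ∈ V satisfies η(v,v) ≥ 0 (it is either null or timelike); moreover, there exists s ∈ S with η(κ(s,s), κ(s,s)) > 0. -/
noncomputable section

variable (V : Type) [AddCommGroup V] [Module ℝ V]

lemma aux_scalar {S : Type} [AddCommGroup S] [Module ℝ S] (M : Module.End ℝ S)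
    (h : ∀ g : Module.End ℝ S, M * g = g * M) : ∃ c : ℝ, ∀ s : S, M s = c • s := by
  by_cases hS : ∃ x : S, x ≠ 0
  · obtain ⟨x₀, hx₀⟩ := hS
    have : ¬ (∀ φ : Module.Dual ℝ S, φ x₀ = 0) := by
      rw [Module.forall_dual_apply_eq_zero_iff]; exact hx₀
    push_neg at this
    obtain ⟨φ, hφ⟩ := this
    set ψ : Module.Dual ℝ S := (φ x₀)⁻¹ • φ with hψdef
    have hψ : ψ x₀ = 1 := by
      simp [hψdef, inv_mul_cancel₀ hφ]
    refine ⟨ψ (M x₀), fun x => ?_⟩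
    have hg := h (LinearMap.smulRight ψ x)
    have := congrArg (fun f : Module.End ℝ S => f x₀) hg
    simp only [Module.End.mul_apply] at this
    simpa [hψ] using this
  · push_neg at hS
    exact ⟨0, fun s => by rw [hS (M s), hS s]; simp⟩

lemma aux_cs {S : Type} [AddCommGroup S] [Module ℝ S] (B : LinearMap.BilinForm ℝ S)
    (hsym : ∀ x y, B x y = B y x) (hpos : ∀ x, 0 ≤ B x x) (x y : S) :
    (B x y) ^ 2 ≤ B x x * B y y := by
  have expand : ∀ t : ℝ, B (t • x + y) (t • x + y)
      = B x x * (t * t) + (2 * B x y) * t + B y y := by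
    intro t
    simp only [map_add, map_smul, LinearMap.add_apply, LinearMap.smul_apply, smul_eq_mul]
    rw [hsym y x]; ring
  have hq : ∀ t : ℝ, 0 ≤ B x x * (t * t) + (2 * B x y) * t + B y y := by
    intro t; rw [← expand t]; exact hpos _
  have := discrim_le_zero hq
  rw [discrim] at this
  nlinarith

set_option maxHeartbeats 4000000 in
/-- the Dirac current `κ(s,s)` is always causal (`η(κ(s,s),κ(s,s)) ≥ 0`),
and some spinor has timelike Dirac current. -/
theorem stmt_15
    (η : LinearMap.BilinForm ℝ V) (e : Module.Basis (Fin 11) ℝ V) (he : IsLorentzianBasis V η e)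
    (S : Type) [AddCommGroup S] [Module ℝ S] (hdimS : Module.finrank ℝ S = 32)
    (ρ : CliffordAlgebra (Qf V η) →ₐ[ℝ] Module.End ℝ S) (hρ : Function.Surjective ρ)
    (hvol : ρ ((List.ofFn fun i => CliffordAlgebra.ι (Qf V η) (e i)).prod) = -1)
    (ω : LinearMap.BilinForm ℝ S) (hω_alt : ∀ s : S, ω s s = 0)
    (hω_nd : ω.Nondegenerate)
    (hωι : ∀ (v : V) (s t : S),
      ω (ρ (CliffordAlgebra.ι (Qf V η) v) s) t = - ω s (ρ (CliffordAlgebra.ι (Qf V η) v) t))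
    (κ : S →ₗ[ℝ] S →ₗ[ℝ] V) (hκ_symm : ∀ s t : S, κ s t = κ t s)
    (hκ : ∀ (v : V) (s t : S), η v (κ s t) = ω (ρ (CliffordAlgebra.ι (Qf V η) v) s) t)
    :
    (∀ s : S, 0 ≤ η (κ s s) (κ s s)) ∧ (∃ s : S, 0 < η (κ s s) (κ s s)) := by
  classical
  haveI : FiniteDimensional ℝ S := FiniteDimensional.of_finrank_pos (by rw [hdimS]; norm_num)
  haveI : Nontrivial S := by
    exact Module.nontrivial_of_finrank_pos (R := ℝ) (by rw [hdimS]; norm_num)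
  -- basic notation
  set ι' : V →ₗ[ℝ] CliffordAlgebra (Qf V η) := CliffordAlgebra.ι (Qf V η) with hι'
  set r : Fin 11 → Module.End ℝ S := fun j => ρ (ι' (e j)) with hrdef
  set ε : Fin 11 → ℝ := fun j => if (j : ℕ) = 0 then 1 else -1 with hεdef
  have hε2 : ∀ j, ε j * ε j = 1 := by
    intro j; by_cases h : j = 0 <;> simp [hεdef, h]
  have hQapp : ∀ v : V, Qf V η v = - η v v := by
    intro v
    simp [Qf, LinearMap.BilinMap.toQuadraticMap_apply]
  have hQe : ∀ j : Fin 11, Qf V η (e j) = - ε j := by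
    intro j; rw [hQapp, he j j]; simp [hεdef]
  have hortho : ∀ j k : Fin 11, j ≠ k → (Qf V η).IsOrtho (e j) (e k) := by
    intro j k hjk
    rw [QuadraticMap.isOrtho_def]
    simp only [hQapp, map_add, LinearMap.add_apply]
    rw [he j k, he k j]
    simp [hjk, Ne.symm hjk]
    ring
  -- squares and anticommutation
  have hrsq : ∀ (j : Fin 11) (x : S), r j (r j x) = (- ε j) • x := by
    intro j x
    have h1 : r j * r j = ρ (ι' (e j) * ι' (e j)) := by rw [map_mul]
    rw [CliffordAlgebra.ι_sq_scalar, hQe] at h1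
    have h2 : ρ (algebraMap ℝ _ (- ε j)) = algebraMap ℝ (Module.End ℝ S) (- ε j) :=
      AlgHom.commutes _ _
    have := congrArg (fun f : Module.End ℝ S => f x) (h1.trans h2)
    simpa [Module.End.mul_apply, Module.algebraMap_end_apply] using this
  have hanti : ∀ (j k : Fin 11), j ≠ k → ∀ x : S, r j (r k x) = - r k (r j x) := by
    intro j k hjk x
    have h1 : ι' (e j) * ι' (e k) = -(ι' (e k) * ι' (e j)) :=
      CliffordAlgebra.ι_mul_ι_comm_of_isOrtho (hortho j k hjk)
    have h2 : r j * r k = -(r k * r j) := by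
      rw [hrdef]; simp only [← map_mul, h1, map_neg]
    have := congrArg (fun f : Module.End ℝ S => f x) h2
    simpa [Module.End.mul_apply] using this
  -- positive definite seed form
  set b : Module.Basis (Fin (Module.finrank ℝ S)) ℝ S := Module.finBasis ℝ S with hbdef
  set βp : LinearMap.BilinForm ℝ S :=
    ∑ k, (b.coord k).smulRight (b.coord k) with hβpdef
  have hβp_apply : ∀ x y : S, βp x y = ∑ k, b.repr x k * b.repr y k := by
    intro x y
    simp [hβpdef, LinearMap.sum_apply, LinearMap.smulRight_apply, Module.Basis.coord_apply,
      smul_eq_mul, mul_comm]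
  have hβp_pos : ∀ x : S, 0 ≤ βp x x := by
    intro x; rw [hβp_apply]
    exact Finset.sum_nonneg fun k _ => mul_self_nonneg _
  have hβp_sym : ∀ x y : S, βp x y = βp y x := by
    intro x y; rw [hβp_apply, hβp_apply]
    exact Finset.sum_congr rfl fun k _ => mul_comm _ _
  have hβp_def : ∀ x : S, βp x x = 0 → x = 0 := by
    intro x hx
    rw [hβp_apply] at hx
    have hz : ∀ k ∈ Finset.univ, b.repr x k * b.repr x k = 0 := by
      intro k _
      have := (Finset.sum_eq_zero_iff_of_nonneg
        (fun k _ => mul_self_nonneg (b.repr x k))).mp hx k (Finset.mem_univ k)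
      exact this
    have : b.repr x = 0 := by
      ext k
      have := hz k (Finset.mem_univ k)
      have := mul_self_eq_zero.mp this
      simpa using this
    have := congrArg (b.repr.symm) this
    simpa using this
  -- averaging
  set g : ℕ → Module.End ℝ S := fun k => if h : k < 11 then r ⟨k, h⟩ else 1 with hgdef
  set F : ℕ → LinearMap.BilinForm ℝ S :=
    fun n => Nat.rec βp (fun k Fk => Fk + Fk.compl₁₂ (g k) (g k)) n with hFdef
  have hF0 : F 0 = βp := rfl
  have hFsucc : ∀ (k : ℕ) (x y : S), F (k+1) x y = F k x y + F k (g k x) (g k y) := by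
    intro k x y; rfl
  have hFpos : ∀ (n : ℕ) (x : S), 0 ≤ F n x x := by
    intro n
    induction n with
    | zero => exact hβp_pos
    | succ k ih => intro x; rw [hFsucc]; exact add_nonneg (ih x) (ih _)
  have hFge : ∀ (n : ℕ) (x : S), βp x x ≤ F n x x := by
    intro n
    induction n with
    | zero => intro x; rw [hF0]
    | succ k ih => intro x; rw [hFsucc]; have := hFpos k (g k x); linarith [ih x]
  have hFsym : ∀ (n : ℕ) (x y : S), F n x y = F n y x := by
    intro n
    induction n with
    | zero => exact hβp_sym
    | succ k ih => intro x y; rw [hFsucc, hFsucc, ih x y, ih (g k x) (g k y)]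
  have hFinv : ∀ n : ℕ, n ≤ 11 → ∀ j : Fin 11, (j : ℕ) < n →
      ∀ x y, F n (r j x) (r j y) = F n x y := by
    intro n
    induction n with
    | zero => intro _ j hj; omega
    | succ k ih =>
      intro hk j hj x y
      have hk11 : k < 11 := by omega
      have hgk : ∀ z : S, g k z = r ⟨k, hk11⟩ z := by
        intro z; simp [hgdef, dif_pos hk11]
      rw [hFsucc, hFsucc]
      simp only [hgk]
      rcases Nat.lt_succ_iff_lt_or_eq.mp hj with hlt | heq
      · -- j < k
        have hne : (⟨k, hk11⟩ : Fin 11) ≠ j := by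
          intro h
          have : ((⟨k, hk11⟩ : Fin 11) : ℕ) = (j : ℕ) := congrArg Fin.val h
          simp at this; omega
        have h1 : F k (r j x) (r j y) = F k x y := ih (by omega) j hlt x y
        have h2 : F k (r ⟨k, hk11⟩ (r j x)) (r ⟨k, hk11⟩ (r j y))
            = F k (r ⟨k, hk11⟩ x) (r ⟨k, hk11⟩ y) := by
          rw [hanti _ _ hne x, hanti _ _ hne y]
          simp only [map_neg, LinearMap.neg_apply, neg_neg]
          exact ih (by omega) j hlt _ _
        rw [h1, h2]
      · -- j = k
        have hjk : j = (⟨k, hk11⟩ : Fin 11) := by ext; exact heq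
        rw [← hjk, hrsq, hrsq]
        simp only [map_smul, LinearMap.smul_apply, smul_eq_mul]
        linear_combination F k x y * hε2 j
  set β₀ : LinearMap.BilinForm ℝ S := F 11 with hβ₀def
  have hβ₀inv : ∀ (j : Fin 11) (x y : S), β₀ (r j x) (r j y) = β₀ x y := by
    intro j x y; exact hFinv 11 le_rfl j j.isLt x y
  have hβ₀sym : ∀ x y : S, β₀ x y = β₀ y x := hFsym 11
  have hβ₀pos : ∀ x : S, 0 ≤ β₀ x x := hFpos 11
  have hβ₀posdef : ∀ x : S, x ≠ 0 → 0 < β₀ x x := by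
    intro x hx
    rcases lt_or_eq_of_le (hβ₀pos x) with h | h
    · exact h
    · exfalso
      apply hx
      apply hβp_def
      have h1 := hFge 11 x
      have h2 := hβp_pos x
      rw [← hβ₀def] at h1
      linarith
  have hβ₀nd : β₀.Nondegenerate := by
    constructor
    all_goals
      intro x hx
      by_contra hne
      have := hβ₀posdef x hne
      rw [hx x] at this
      exact lt_irrefl 0 this
  clear hFinv hFsym hFpos hFge hFsucc hF0 hβp_apply hβp_pos hβp_sym hβp_def
  clear_value β₀
  clear hβ₀def hFdef F hgdef g hβpdef βp hbdef b
  -- the form β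
  set β : LinearMap.BilinForm ℝ S := ω ∘ₗ (r 0 : S →ₗ[ℝ] S) with hβdef
  have hβapp : ∀ x y : S, β x y = ω (r 0 x) y := fun x y => rfl
  have hωr : ∀ (j : Fin 11) (x y : S), ω (r j x) y = - ω x (r j y) := by
    intro j x y; exact hωι (e j) x y
  have hε0 : ε 0 = 1 := by simp [hεdef]
  have hεne : ∀ j : Fin 11, j ≠ 0 → ε j = -1 := by
    intro j hj
    have : (j : ℕ) ≠ 0 := by
      intro h; apply hj; ext; simpa using h
    simp [hεdef, this, hj]
  have hr0sq : ∀ x : S, r 0 (r 0 x) = - x := by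
    intro x; rw [hrsq]; rw [hε0]; simp
  have hrjsq : ∀ j : Fin 11, j ≠ 0 → ∀ x : S, r j (r j x) = x := by
    intro j hj x; rw [hrsq, hεne j hj]; simp
  have hβinv : ∀ (j : Fin 11) (x y : S), β (r j x) (r j y) = β x y := by
    intro j x y
    by_cases hj : j = 0
    · subst hj
      rw [hβapp, hβapp, hr0sq]
      rw [show ω (-x) (r 0 y) = - ω x (r 0 y) by simp]
      rw [← hωr 0 x y]
    · rw [hβapp, hβapp]
      rw [hanti 0 j (Ne.symm hj) x]
      rw [show ω (-(r j (r 0 x))) (r j y) = - ω (r j (r 0 x)) (r j y) by simp]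
      rw [hωr j (r 0 x) (r j y), hrjsq j hj]
      ring
  -- moving r's across the forms
  have hβ₀move : ∀ (j : Fin 11) (x y : S), β₀ (r j x) y = (- ε j) * β₀ x (r j y) := by
    intro j x y
    have h1 : r j ((- ε j) • (r j y)) = y := by
      rw [map_smul, hrsq]
      rw [smul_smul]
      have : -ε j * -ε j = 1 := by linear_combination hε2 j
      rw [this, one_smul]
    calc β₀ (r j x) y = β₀ (r j x) (r j ((- ε j) • (r j y))) := by rw [h1]
      _ = β₀ x ((- ε j) • (r j y)) := hβ₀inv j x _
      _ = (- ε j) * β₀ x (r j y) := by rw [map_smul, smul_eq_mul]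
  have hβmove : ∀ (j : Fin 11) (x y : S), β (r j x) y = (- ε j) * β x (r j y) := by
    intro j x y
    have h1 : r j ((- ε j) • (r j y)) = y := by
      rw [map_smul, hrsq]
      rw [smul_smul]
      have : -ε j * -ε j = 1 := by linear_combination hε2 j
      rw [this, one_smul]
    calc β (r j x) y = β (r j x) (r j ((- ε j) • (r j y))) := by rw [h1]
      _ = β x ((- ε j) • (r j y)) := hβinv j x _
      _ = (- ε j) * β x (r j y) := by rw [map_smul, smul_eq_mul]
  -- the intertwiner M
  set M : S →ₗ[ℝ] S :=
    (LinearMap.BilinForm.toDual β₀ hβ₀nd).symm.toLinearMap ∘ₗ β with hMdef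
  have hM : ∀ x y : S, β₀ (M x) y = β x y := by
    intro x y
    have : β₀ (M x) y = (LinearMap.BilinForm.toDual β₀ hβ₀nd) (M x) y := by
      rw [LinearMap.BilinForm.toDual_def]
    rw [this, hMdef]
    simp
  have hMr : ∀ (j : Fin 11) (x : S), M (r j x) = r j (M x) := by
    intro j x
    have key : ∀ y : S, β₀ (M (r j x) - r j (M x)) y = 0 := by
      intro y
      rw [map_sub, LinearMap.sub_apply]
      have h1 : β₀ (M (r j x)) y = (- ε j) * β x (r j y) := by
        rw [hM, hβmove]
      have h2 : β₀ (r j (M x)) y = (- ε j) * β x (r j y) := by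
        rw [hβ₀move, hM]
      rw [h1, h2]; ring
    have := hβ₀nd.1 _ key
    rwa [sub_eq_zero] at this
  have hMρ : ∀ (u : CliffordAlgebra (Qf V η)) (x : S), M (ρ u x) = ρ u (M x) := by
    intro u
    induction u using CliffordAlgebra.induction with
    | algebraMap c =>
      intro x
      rw [AlgHom.commutes]
      simp [Module.algebraMap_end_apply]
    | ι v =>
      intro x
      have hv : ι' v = ∑ j, e.repr v j • ι' (e j) := by
        conv_lhs => rw [← e.sum_repr v]
        rw [map_sum]
        simp [map_smul]
      have hρv : ∀ z : S, ρ (ι' v) z = ∑ j, e.repr v j • r j z := by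
        intro z
        rw [hv, map_sum]
        simp only [map_smul, LinearMap.smul_apply, LinearMap.sum_apply]
        rfl
      rw [hρv, map_sum, hρv]
      congr 1
      ext j
      rw [map_smul, hMr]
    | mul a c ha hc =>
      intro x
      rw [map_mul]
      simp only [Module.End.mul_apply]
      rw [ha, hc]
    | add a c ha hc =>
      intro x
      simp only [map_add, LinearMap.add_apply, ha, hc]
  have hMall : ∀ f : Module.End ℝ S, M * f = f * M := by
    intro f
    obtain ⟨u, rfl⟩ := hρ f
    ext x
    simp only [Module.End.mul_apply]
    exact hMρ u x
  obtain ⟨c, hc⟩ := aux_scalar M hMall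
  have hcω : ∀ x y : S, ω (r 0 x) y = c * β₀ x y := by
    intro x y
    rw [← hβapp, ← hM, hc x, map_smul, LinearMap.smul_apply, smul_eq_mul]
  clear hc hMall hMρ hMr hM
  clear_value M
  clear hMdef M
  have hcne : c ≠ 0 := by
    intro h0
    obtain ⟨x, hx⟩ := exists_ne (0 : S)
    have hall : ∀ z : S, r 0 z = 0 := by
      intro z
      apply hω_nd.1
      intro y
      rw [hcω, h0, zero_mul]
    have := hr0sq x
    rw [hall (r 0 x)] at this
    exact hx (neg_eq_zero.mp this.symm)
  -- the operators τ j = r 0 ∘ r j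
  set τ : Fin 11 → S → S := fun j x => r 0 (r j x) with hτdef
  have hτadd : ∀ (j : Fin 11) (x y : S), τ j (x + y) = τ j x + τ j y := by
    intro j x y; simp only [hτdef, map_add]
  have hred : ∀ (j k : Fin 11), j ≠ 0 → ∀ x : S, τ j (τ k x) = r j (r k x) := by
    intro j k hj x
    show r 0 (r j (r 0 (r k x))) = r j (r k x)
    rw [hanti j 0 hj (r k x), map_neg, hr0sq, neg_neg]
  have hτsq : ∀ j : Fin 11, j ≠ 0 → ∀ x : S, τ j (τ j x) = x := by
    intro j hj x; rw [hred j j hj, hrjsq j hj]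
  have hτswap : ∀ j k : Fin 11, j ≠ 0 → k ≠ 0 → j ≠ k →
      ∀ x : S, τ j (τ k x) = - τ k (τ j x) := by
    intro j k hj hk hjk x
    rw [hred j k hj, hred k j hk, hanti j k hjk]
  have hτsa : ∀ j : Fin 11, j ≠ 0 → ∀ x y : S, β₀ (τ j x) y = β₀ x (τ j y) := by
    intro j hj x y
    have h1 : β₀ (τ j x) y = - β₀ (r j x) (r 0 y) := by
      show β₀ (r 0 (r j x)) y = _
      rw [hβ₀move 0, hε0]; ring
    have h2 : β₀ (r j x) (r 0 y) = - β₀ x (r 0 (r j y)) := by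
      rw [hβ₀move j, hεne j hj]
      rw [hanti j 0 hj y, map_neg]
      ring
    rw [h1, h2, neg_neg]
  have hωexp : ∀ x y : S, ω x y = -c * β₀ (r 0 x) y := by
    intro x y
    have hx : r 0 (-(r 0 x)) = x := by rw [map_neg, hr0sq, neg_neg]
    calc ω x y = ω (r 0 (-(r 0 x))) y := by rw [hx]
      _ = c * β₀ (-(r 0 x)) y := hcω _ _
      _ = -c * β₀ (r 0 x) y := by rw [map_neg, LinearMap.neg_apply]; ring
  set E : Finset (Fin 11) := Finset.univ.erase 0 with hEdef
  have hEmem : ∀ j : Fin 11, j ∈ E → j ≠ 0 := by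
    intro j hj; exact (Finset.mem_erase.mp hj).1
  -- main formula
  have hmain : ∀ s : S, η (κ s s) (κ s s)
      = c^2 * ((β₀ s s)^2 - ∑ j ∈ E, (β₀ (τ j s) s)^2) := by
    intro s
    set v : V := κ s s with hv
    set a : Fin 11 → ℝ := fun j => e.repr v j with ha
    set w : Fin 11 → ℝ := fun j => ω (r j s) s with hwdef
    have h3 : ∀ j, η (e j) v = w j := fun j => hκ (e j) s s
    have h1 : ∀ j, η (e j) v = ε j * a j := by
      intro j
      conv_lhs => rw [← e.sum_repr v]
      rw [map_sum]
      rw [Finset.sum_eq_single j]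
      · rw [map_smul, smul_eq_mul, he j j]
        by_cases h : j = 0 <;> simp [hεdef, ha, h]
      · intro k _ hkj
        rw [map_smul, smul_eq_mul, he j k, if_neg (Ne.symm hkj), mul_zero]
      · intro h; exact absurd (Finset.mem_univ j) h
    have h4 : ∀ j, a j = ε j * w j := by
      intro j
      have h := (h1 j).symm.trans (h3 j)
      linear_combination ε j * h - a j * hε2 j
    have h5 : η v v = ∑ j, ε j * (w j)^2 := by
      have hηv : η v = ∑ j, a j • η (e j) := by
        conv_lhs => rw [← e.sum_repr v]
        rw [map_sum]
        simp only [map_smul]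
        rfl
      rw [hηv, LinearMap.sum_apply]
      apply Finset.sum_congr rfl
      intro j _
      rw [LinearMap.smul_apply, smul_eq_mul, h3 j, h4 j]
      ring
    have h6 : η v v = w 0^2 - ∑ j ∈ E, (w j)^2 := by
      rw [h5, ← Finset.add_sum_erase _ _ (Finset.mem_univ (0 : Fin 11))]
      rw [hε0, ← hEdef]
      have : ∑ j ∈ E, ε j * w j ^ 2 = ∑ j ∈ E, (- (w j ^2)) := by
        apply Finset.sum_congr rfl
        intro j hj
        rw [hεne j (hEmem j hj)]; ring
      rw [this, Finset.sum_neg_distrib]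
      ring
    have h7 : w 0 = c * β₀ s s := hcω s s
    have h8 : ∀ j ∈ E, w j = -c * β₀ (τ j s) s := by
      intro j _
      exact hωexp (r j s) s
    rw [h6, h7]
    have : ∑ j ∈ E, (w j)^2 = ∑ j ∈ E, c^2 * (β₀ (τ j s) s)^2 := by
      apply Finset.sum_congr rfl
      intro j hj
      rw [h8 j hj]; ring
    rw [this, ← Finset.mul_sum]
    ring
  -- the Cauchy-Schwarz style bound
  have hQ2 : ∀ s : S, (∑ j ∈ E, (β₀ (τ j s) s)^2) ≤ (β₀ s s)^2 := by
    intro s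
    set u : Fin 11 → ℝ := fun j => β₀ (τ j s) s with hu
    set m2 : ℝ := ∑ j ∈ E, (u j)^2 with hm2
    set W : S := ∑ j ∈ E, u j • τ j s with hW
    have hm2nn : 0 ≤ m2 := Finset.sum_nonneg fun j _ => sq_nonneg _
    have e1 : ∀ y : S, β₀ W y = ∑ j ∈ E, u j * β₀ (τ j s) y := by
      intro y
      rw [hW, map_sum, LinearMap.sum_apply]
      apply Finset.sum_congr rfl
      intro j _
      rw [map_smul, LinearMap.smul_apply, smul_eq_mul]
    have hws : β₀ W s = m2 := by
      rw [e1 s, hm2]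
      apply Finset.sum_congr rfl
      intro j _
      rw [pow_two]
    have hterm : ∀ k, k ≠ 0 → β₀ (τ k s) W = u k * β₀ s s := by
      intro k hk
      rw [hW, map_sum]
      rw [Finset.sum_eq_single k]
      · rw [map_smul, smul_eq_mul, hτsa k hk s (τ k s), hτsq k hk]
      · intro j hjE hjk
        rw [map_smul, smul_eq_mul]
        have hj0 : j ≠ 0 := hEmem j hjE
        have h1 : β₀ (τ k s) (τ j s) = β₀ (τ j (τ k s)) s := (hτsa j hj0 (τ k s) s).symm
        have h2 : τ j (τ k s) = - τ k (τ j s) := hτswap j k hj0 hk hjk s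
        have h3 : β₀ (τ k s) (τ j s) = - β₀ (τ k (τ j s)) s := by
          rw [h1, h2, map_neg, LinearMap.neg_apply]
        have h4 : β₀ (τ k (τ j s)) s = β₀ (τ j s) (τ k s) := by
          rw [hτsa k hk (τ j s) s, hβ₀sym]
        -- β₀ (τ k s) (τ j s) = - β₀ (τ j s) (τ k s), and by symmetry both are zero
        have h5 : β₀ (τ k s) (τ j s) = - β₀ (τ j s) (τ k s) := by
          rw [h3, h4]
        have h6 : β₀ (τ k s) (τ j s) = β₀ (τ j s) (τ k s) := hβ₀sym _ _
        have h7 : β₀ (τ k s) (τ j s) = 0 := by linarith [h5, h6]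
        rw [h7, mul_zero]
      · intro h
        exfalso
        apply h
        rw [hEdef, Finset.mem_erase]
        exact ⟨hk, Finset.mem_univ k⟩
    have hww : β₀ W W = m2 * β₀ s s := by
      have e2 : ∑ j ∈ E, u j * β₀ (τ j s) W = ∑ j ∈ E, (u j)^2 * β₀ s s :=
        Finset.sum_congr rfl (fun j hj => by rw [hterm j (hEmem j hj)]; ring)
      rw [e1 W, e2, ← Finset.sum_mul, ← hm2]
    have hcs := aux_cs β₀ hβ₀sym hβ₀pos W s
    rw [hws, hww] at hcs
    rcases eq_or_lt_of_le hm2nn with h | h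
    · rw [← h]; exact sq_nonneg _
    · nlinarith
  have part1 : ∀ s : S, 0 ≤ η (κ s s) (κ s s) := by
    intro s
    rw [hmain s]
    have := hQ2 s
    nlinarith [sq_nonneg c]
  refine ⟨part1, ?_⟩
  by_contra hno
  push_neg at hno
  have hnull : ∀ s : S, η (κ s s) (κ s s) = 0 :=
    fun s => le_antisymm (hno s) (part1 s)
  have hkey : ∀ s : S, (β₀ s s)^2 = ∑ j ∈ E, (β₀ (τ j s) s)^2 := by
    intro s
    have h := hnull s
    rw [hmain s] at h
    have hc2 : c^2 ≠ 0 := pow_ne_zero 2 hcne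
    have := mul_eq_zero.mp h
    rcases this with h' | h'
    · exact absurd h' hc2
    · linarith [sub_eq_zero.mp h']
  -- eigenspaces of τ 1
  set T : Module.End ℝ S := r 0 * r 1 with hTdef
  have hT : ∀ x : S, T x = τ 1 x := fun x => rfl
  have h10 : (1 : Fin 11) ≠ 0 := by decide
  have h20 : (2 : Fin 11) ≠ 0 := by decide
  have h12 : (1 : Fin 11) ≠ 2 := by decide
  set P : Submodule ℝ S := LinearMap.ker (T - 1) with hPdef
  set N : Submodule ℝ S := LinearMap.ker (T + 1) with hNdef
  have hPmem : ∀ x : S, x ∈ P ↔ τ 1 x = x := by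
    intro x
    rw [hPdef, LinearMap.mem_ker, LinearMap.sub_apply, Module.End.one_apply, sub_eq_zero, hT]
  have hNmem : ∀ x : S, x ∈ N ↔ τ 1 x = -x := by
    intro x
    rw [hNdef, LinearMap.mem_ker, LinearMap.add_apply, Module.End.one_apply,
      add_eq_zero_iff_eq_neg, hT]
  have hPN : ∀ x : S, x ∈ P ⊔ N := by
    intro x
    have hp : (2:ℝ)⁻¹ • (x + τ 1 x) ∈ P := by
      refine (hPmem _).mpr ?_
      have : τ 1 ((2:ℝ)⁻¹ • (x + τ 1 x)) = (2:ℝ)⁻¹ • (τ 1 x + τ 1 (τ 1 x)) := by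
        show r 0 (r 1 _) = _
        rw [map_smul, map_smul, map_add, map_add]
      rw [this, hτsq 1 h10]
      rw [add_comm]
    have hn : (2:ℝ)⁻¹ • (x - τ 1 x) ∈ N := by
      refine (hNmem _).mpr ?_
      have : τ 1 ((2:ℝ)⁻¹ • (x - τ 1 x)) = (2:ℝ)⁻¹ • (τ 1 x - τ 1 (τ 1 x)) := by
        show r 0 (r 1 _) = _
        rw [map_smul, map_smul, map_sub, map_sub]
      rw [this, hτsq 1 h10, ← smul_neg, neg_sub]
    have : x = (2:ℝ)⁻¹ • (x + τ 1 x) + (2:ℝ)⁻¹ • (x - τ 1 x) := by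
      rw [smul_add, smul_sub]
      module
    rw [this]
    exact Submodule.add_mem _ (Submodule.mem_sup_left hp) (Submodule.mem_sup_right hn)
  have hdim : 32 ≤ Module.finrank ℝ P + Module.finrank ℝ N := by
    have hsup : P ⊔ N = ⊤ := by
      rw [eq_top_iff]; intro x _; exact hPN x
    have := Submodule.finrank_sup_add_finrank_inf_eq P N
    rw [hsup, finrank_top, hdimS] at this
    omega
  have horth : ∀ x ∈ P, ∀ y ∈ N, β₀ x y = 0 := by
    intro x hx y hy
    have h1 : β₀ x y = β₀ (τ 1 x) y := by rw [(hPmem x).mp hx]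
    have h2 : β₀ (τ 1 x) y = - β₀ x y := by
      rw [hτsa 1 h10 x y, (hNmem y).mp hy]
      exact map_neg (β₀ x) y
    linarith [h1, h2]
  -- τ j maps P to N and back, for j ∈ E, j ≠ 1
  have hswapPN : ∀ j : Fin 11, j ≠ 0 → j ≠ 1 → ∀ x ∈ P, τ j x ∈ N := by
    intro j hj0 hj1 x hx
    refine (hNmem _).mpr ?_
    rw [hτswap 1 j h10 hj0 (Ne.symm hj1) x, (hPmem x).mp hx]
  have hswapNP : ∀ j : Fin 11, j ≠ 0 → j ≠ 1 → ∀ x ∈ N, τ j x ∈ P := by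
    intro j hj0 hj1 x hx
    refine (hPmem _).mpr ?_
    rw [hτswap 1 j h10 hj0 (Ne.symm hj1) x, (hNmem x).mp hx]
    have : τ j (-x) = - τ j x := by
      show r 0 (r j (-x)) = _
      rw [map_neg, map_neg]
    rw [this, neg_neg]
  -- key bilinear identity
  have hkey2 : ∀ a ∈ P, ∀ b ∈ N,
      β₀ a a * β₀ b b = ∑ j ∈ E.erase 1, (β₀ (τ j a) b)^2 := by
    intro a ha b hb
    have h1E : (1 : Fin 11) ∈ E := by decide
    have h := hkey (a + b)
    have hab : β₀ (a+b) (a+b) = β₀ a a + β₀ b b := by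
      simp only [map_add, LinearMap.add_apply]
      rw [horth a ha b hb, hβ₀sym b a, horth a ha b hb]
      ring
    have h1term : β₀ (τ 1 (a+b)) (a+b) = β₀ a a - β₀ b b := by
      rw [hτadd, (hPmem a).mp ha, (hNmem b).mp hb]
      simp only [map_add, map_neg, LinearMap.add_apply, LinearMap.neg_apply]
      rw [horth a ha b hb, hβ₀sym b a, horth a ha b hb]
      ring
    have hjterm : ∀ j ∈ E.erase 1, β₀ (τ j (a+b)) (a+b) = 2 * β₀ (τ j a) b := by
      intro j hj
      have hj1 : j ≠ 1 := (Finset.mem_erase.mp hj).1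
      have hj0 : j ≠ 0 := hEmem j (Finset.mem_erase.mp hj).2
      have hτjaN : τ j a ∈ N := hswapPN j hj0 hj1 a ha
      have hτjbP : τ j b ∈ P := hswapNP j hj0 hj1 b hb
      rw [hτadd]
      simp only [map_add, LinearMap.add_apply]
      have z1 : β₀ (τ j a) a = 0 := by
        rw [hβ₀sym]; exact horth a ha (τ j a) hτjaN
      have z2 : β₀ (τ j b) b = 0 := horth (τ j b) hτjbP b hb
      have z3 : β₀ (τ j b) a = β₀ (τ j a) b := by
        rw [hτsa j hj0 b a, hβ₀sym]
      rw [z1, z2, z3]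
      ring
    rw [← Finset.add_sum_erase _ _ h1E, h1term, hab] at h
    have hsum : ∑ j ∈ E.erase 1, (β₀ (τ j (a+b)) (a+b))^2
        = ∑ j ∈ E.erase 1, 4 * (β₀ (τ j a) b)^2 := by
      apply Finset.sum_congr rfl
      intro j hj
      rw [hjterm j hj]; ring
    have hpull : ∑ j ∈ E.erase 1, 4 * (β₀ (τ j a) b)^2
        = 4 * ∑ j ∈ E.erase 1, (β₀ (τ j a) b)^2 := by
      rw [Finset.mul_sum]
    rw [hsum, hpull] at h
    nlinarith [h]
  -- the embedding Fin 9 → Fin 11 hitting E.erase 1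
  set emb : Fin 9 → Fin 11 := fun i => ⟨(i : ℕ) + 2, by omega⟩ with hembdef
  -- generic contradiction machine
  have machine : ∀ (W W' : Submodule ℝ S), 10 ≤ Module.finrank ℝ W →
      (∀ x ∈ W, τ 2 x ∈ W') →
      (∀ cc ∈ W', ∀ x ∈ W, β₀ cc cc * β₀ x x = ∑ j ∈ E.erase 1, (β₀ (τ j cc) x)^2) →
      False := by
    intro W W' hrank hmap hkeyW
    have hWne : W ≠ ⊥ := by
      intro h
      rw [h, finrank_bot] at hrank
      omega
    obtain ⟨b₀, hb₀W, hb₀ne⟩ := Submodule.exists_mem_ne_zero_of_ne_bot hWne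
    set cc : S := τ 2 b₀ with hccdef
    have hccW' : cc ∈ W' := hmap b₀ hb₀W
    have hccne : cc ≠ 0 := by
      intro h
      apply hb₀ne
      have := hτsq 2 h20 b₀
      rw [← hccdef, h] at this
      rw [← this]
      show r 0 (r 2 0) = 0
      rw [map_zero, map_zero]
    set L : S →ₗ[ℝ] (Fin 9 → ℝ) := LinearMap.pi (fun i => β₀ (τ (emb i) cc)) with hLdef
    set L' : W →ₗ[ℝ] (Fin 9 → ℝ) := L.domRestrict W with hL'def
    have hker : LinearMap.ker L' ≠ ⊥ := by
      intro h
      have h1 := LinearMap.finrank_range_add_finrank_ker L'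
      rw [h, finrank_bot, add_zero] at h1
      have h2 : Module.finrank ℝ (LinearMap.range L') ≤ 9 := by
        have := Submodule.finrank_le (LinearMap.range L')
        rw [Module.finrank_fin_fun] at this
        exact this
      omega
    obtain ⟨x, hxker, hxne⟩ := Submodule.exists_mem_ne_zero_of_ne_bot hker
    have hxW : (x : S) ∈ W := x.2
    have hxzero : ∀ i : Fin 9, β₀ (τ (emb i) cc) (x : S) = 0 := by
      intro i
      have h0 : L' x = 0 := LinearMap.mem_ker.mp hxker
      have := congrFun h0 i
      simpa [hL'def, hLdef, LinearMap.pi_apply] using this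
    have hxvne : (x : S) ≠ 0 := fun h => hxne (Submodule.coe_eq_zero.mp h)
    have h := hkeyW cc hccW' (x : S) hxW
    have hz : ∀ j ∈ E.erase 1, (β₀ (τ j cc) (x:S))^2 = 0 := by
      intro j hj
      have hj1 : j ≠ 1 := (Finset.mem_erase.mp hj).1
      have hj0 : j ≠ 0 := hEmem j (Finset.mem_erase.mp hj).2
      have hv0 : (j:ℕ) ≠ 0 := fun hh => hj0 (by ext; simpa using hh)
      have hv1 : (j:ℕ) ≠ 1 := fun hh => hj1 (by ext; simpa using hh)
      have hlt : (j:ℕ) < 11 := j.isLt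
      have hge : 2 ≤ (j:ℕ) := by omega
      set i : Fin 9 := ⟨(j:ℕ) - 2, by omega⟩ with hidef
      have hei : emb i = j := by
        rw [hembdef]; ext; simp [hidef]; omega
      rw [← hei, hxzero i]
      ring
    rw [Finset.sum_eq_zero hz] at h
    have hp1 := hβ₀posdef cc hccne
    have hp2 := hβ₀posdef (x:S) hxvne
    nlinarith
  -- apply the machine
  rcases le_or_gt 10 (Module.finrank ℝ N) with hN | hN
  · apply machine N P hN
    · intro x hx; exact hswapNP 2 h20 (by decide) x hx
    · intro cc hcc x hx
      exact hkey2 cc hcc x hx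
  · have hP : 10 ≤ Module.finrank ℝ P := by omega
    apply machine P N hP
    · intro x hx; exact hswapPN 2 h20 (by decide) x hx
    · intro cc hcc x hx
      have h := hkey2 x hx cc hcc
      calc β₀ cc cc * β₀ x x = β₀ x x * β₀ cc cc := by ring
        _ = ∑ j ∈ E.erase 1, (β₀ (τ j x) cc)^2 := h
        _ = ∑ j ∈ E.erase 1, (β₀ (τ j cc) x)^2 := by
            apply Finset.sum_congr rfl
            intro j hj
            have hj0 : j ≠ 0 := hEmem j (Finset.mem_erase.mp hj).2
            rw [hτsa j hj0 x cc, hβ₀sym]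
end
end

section
/- The Dirac current map is surjective onto V: the set of vectors {κ(s,t) : s,t ∈ S} spans V. (Equivalently, the supertranslation algebra m = V ⊕ S, with bracket on S given by the Dirac current, is a fundamental graded Lie superalgebra: it is generated by its degree −1 part S.) -/
noncomputable section

variable (V : Type) [AddCommGroup V] [Module ℝ V]

/-- the Dirac currents `κ(s,t)` span `V` (the supertranslation algebra
`m = V ⊕ S` is fundamental: generated by its degree `-1` part `S`). -/
theorem stmt_16
    (η : LinearMap.BilinForm ℝ V) (e : Module.Basis (Fin 11) ℝ V) (he : IsLorentzianBasis V η e)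
    (S : Type) [AddCommGroup S] [Module ℝ S] (hdimS : Module.finrank ℝ S = 32)
    (ρ : CliffordAlgebra (Qf V η) →ₐ[ℝ] Module.End ℝ S) (hρ : Function.Surjective ρ)
    (hvol : ρ ((List.ofFn fun i => CliffordAlgebra.ι (Qf V η) (e i)).prod) = -1)
    (ω : LinearMap.BilinForm ℝ S) (hω_alt : ∀ s : S, ω s s = 0)
    (hω_nd : ω.Nondegenerate)
    (hωι : ∀ (v : V) (s t : S),
      ω (ρ (CliffordAlgebra.ι (Qf V η) v) s) t = - ω s (ρ (CliffordAlgebra.ι (Qf V η) v) t))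
    (κ : S →ₗ[ℝ] S →ₗ[ℝ] V) (hκ_symm : ∀ s t : S, κ s t = κ t s)
    (hκ : ∀ (v : V) (s t : S), η v (κ s t) = ω (ρ (CliffordAlgebra.ι (Qf V η) v) s) t)
    :
    Submodule.span ℝ {v : V | ∃ s t : S, v = κ s t} = ⊤ := by
  have : FiniteDimensional ℝ V := e.finiteDimensional_of_finite
  rw [IsLorentzianBasis] at he
  -- S is nontrivial
  have hSnt : Nontrivial S := by
    by_contra h
    rw [not_nontrivial_iff_subsingleton] at h
    rw [Module.finrank_zero_of_subsingleton] at hdimS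
    exact absurd hdimS (by norm_num)
  -- η is nondegenerate
  have hηsep : ∀ v : V, (∀ w : V, η v w = 0) → v = 0 := by
    intro v hv
    have h0 : ∀ j, e.repr v j = 0 := by
      intro j
      have := hv (e j)
      rw [← e.sum_repr v] at this
      simp only [map_sum, map_smul, LinearMap.sum_apply, LinearMap.smul_apply, he _ j,
        smul_eq_mul] at this
      rw [Finset.sum_eq_single j] at this
      · simp only [if_pos rfl] at this
        rcases eq_or_ne (j : ℕ) 0 with hj | hj <;> simp [hj] at this <;> linarith
      · intro i _ hi; simp [hi]
      · simp
    have := e.sum_repr v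
    simp only [h0, zero_smul, Finset.sum_const_zero] at this
    exact this.symm
  -- key: if all currents are η-orthogonal to v then v = 0
  have key : ∀ v : V, (∀ s t : S, η v (κ s t) = 0) → v = 0 := by
    intro v hv
    have hρv : ρ (CliffordAlgebra.ι (Qf V η) v) = 0 := by
      ext s
      refine hω_nd.1 _ fun t => ?_
      rw [← hκ v s t]
      exact hv s t
    refine hηsep v fun w => ?_
    have hpolar : ρ (algebraMap ℝ _ (QuadraticMap.polar (Qf V η) v w)) = 0 := by
      rw [← CliffordAlgebra.ι_mul_ι_add_swap, map_add, map_mul, map_mul, hρv,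
        zero_mul, mul_zero, add_zero]
    rw [AlgHom.commutes] at hpolar
    obtain ⟨s, hs⟩ := exists_ne (0 : S)
    have hps : (QuadraticMap.polar (Qf V η) v w) • s = 0 := by
      have := congrArg (fun f : Module.End ℝ S => f s) hpolar
      simpa [Module.algebraMap_end_apply] using this
    have hc : QuadraticMap.polar (Qf V η) v w = 0 :=
      (smul_eq_zero.mp hps).resolve_right hs
    have hsym : η w v = η v w := by
      rw [← e.sum_repr v, ← e.sum_repr w]
      simp only [map_sum, map_smul, LinearMap.sum_apply, LinearMap.smul_apply, he, smul_eq_mul,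
        Finset.mul_sum]
      rw [Finset.sum_comm]
      refine Finset.sum_congr rfl fun i _ => Finset.sum_congr rfl fun j _ => ?_
      rcases eq_or_ne i j with h | h
      · subst h; ring
      · simp [h, Ne.symm h]
    have : QuadraticMap.polar (Qf V η) v w = -(2 * η v w) := by
      simp only [QuadraticMap.polar, Qf, LinearMap.BilinMap.toQuadraticMap_apply,
        LinearMap.neg_apply, map_add, LinearMap.add_apply]
      rw [hsym]; ring
    rw [this] at hc
    linarith
  -- conclude span = ⊤
  by_contra hne
  obtain ⟨f, hf0, hfmap⟩ := Submodule.exists_dual_map_eq_bot_of_lt_top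
    (lt_top_iff_ne_top.mpr hne) inferInstance
  set v := (η.toDual (.ofSeparatingLeft hηsep)).symm f with hvdef
  have hηv : ∀ w, η v w = f w := fun w => by
    have : η.toDual (.ofSeparatingLeft hηsep) v = f := (η.toDual (.ofSeparatingLeft hηsep)).apply_symm_apply f
    exact congrArg (fun g : Module.Dual ℝ V => g w) this
  have hv0 : v = 0 := by
    refine key v fun s t => ?_
    rw [hηv]
    have hmem : κ s t ∈ Submodule.span ℝ {v : V | ∃ s t : S, v = κ s t} :=
      Submodule.subset_span ⟨s, t, rfl⟩
    have : f (κ s t) ∈ Submodule.map f (Submodule.span ℝ {v : V | ∃ s t : S, v = κ s t}) :=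
      ⟨_, hmem, rfl⟩
    rw [hfmap] at this
    simpa using this
  apply hf0
  have : η.toDual (.ofSeparatingLeft hηsep) v = f := (η.toDual (.ofSeparatingLeft hηsep)).apply_symm_apply f
  rw [hv0] at this
  simpa using this.symm
end
end

section
/- The following two injectivity statements hold (together they express the vanishing H^{4,2}(m,g) = 0 of the degree-4 Spencer cohomology of the Poincaré superalgebra): (i) if a linear map δ: Λ²V → so(V) satisfies δ(κ(s,t) ∧ v) = 0 for all s,t ∈ S and v ∈ V, then δ = 0; (ii) if a linear map δ: Λ²V → so(V) satisfies ρ(j(δ(v∧w))) = 0 in End(S) for all v,w ∈ V, where j: so(V) → L ⊂ Cl(V) is the standard embedding characterized by [j(A), ι(u)] = ι(Au) for all u ∈ V, then δ = 0. -/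
noncomputable section

variable (V : Type) [AddCommGroup V] [Module ℝ V]

/-- vanishing of the degree-4 Spencer cohomology `H^{4,2}(m,g) = 0`,
expressed as two injectivity statements for maps `δ : Λ²V → so(V)` (written as
alternating bilinear maps `V × V → so(V)`): (i) if `δ(κ(s,t) ∧ v) = 0` always, then
`δ = 0`; (ii) if `ρ(j(δ(v∧w))) = 0` always, then `δ = 0`, where `j : so(V) → L` is the
standard embedding characterised by `[j(A), ι(u)] = ι(Au)`. -/
theorem stmt_17
    (η : LinearMap.BilinForm ℝ V) (e : Module.Basis (Fin 11) ℝ V) (he : IsLorentzianBasis V η e)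
    (S : Type) [AddCommGroup S] [Module ℝ S] (hdimS : Module.finrank ℝ S = 32)
    (ρ : CliffordAlgebra (Qf V η) →ₐ[ℝ] Module.End ℝ S) (hρ : Function.Surjective ρ)
    (hvol : ρ ((List.ofFn fun i => CliffordAlgebra.ι (Qf V η) (e i)).prod) = -1)
    (ω : LinearMap.BilinForm ℝ S) (hω_alt : ∀ s : S, ω s s = 0)
    (hω_nd : ω.Nondegenerate)
    (hωι : ∀ (v : V) (s t : S),
      ω (ρ (CliffordAlgebra.ι (Qf V η) v) s) t = - ω s (ρ (CliffordAlgebra.ι (Qf V η) v) t))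
    (κ : S →ₗ[ℝ] S →ₗ[ℝ] V) (hκ_symm : ∀ s t : S, κ s t = κ t s)
    (hκ : ∀ (v : V) (s t : S), η v (κ s t) = ω (ρ (CliffordAlgebra.ι (Qf V η) v) s) t)
    (j : Module.End ℝ V → CliffordAlgebra (Qf V η))
    (hj : ∀ A : Module.End ℝ V, IsSkew V η A →
      j A ∈ Lsub V η ∧ ∀ u : V,
        j A * CliffordAlgebra.ι (Qf V η) u - CliffordAlgebra.ι (Qf V η) u * j A
          = CliffordAlgebra.ι (Qf V η) (A u)) :
    (∀ δ : V →ₗ[ℝ] V →ₗ[ℝ] Module.End ℝ V,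
      (∀ v : V, δ v v = 0) → (∀ v w : V, IsSkew V η (δ v w)) →
      (∀ (s t : S) (v : V), δ (κ s t) v = 0) → δ = 0) ∧
    (∀ δ : V →ₗ[ℝ] V →ₗ[ℝ] Module.End ℝ V,
      (∀ v : V, δ v v = 0) → (∀ v w : V, IsSkew V η (δ v w)) →
      (∀ v w : V, ρ (j (δ v w)) = 0) → δ = 0) := by
  classical
  have he' : ∀ i k, η (e i) (e k) = if i = k then (if (i : ℕ) = 0 then 1 else -1) else 0 := he
  haveI : FiniteDimensional ℝ V := e.finiteDimensional_of_finite
  haveI hSnt : Nontrivial S := by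
    apply Module.nontrivial_of_finrank_eq_succ (n := 31) hdimS
  have hd : ∀ jj : Fin 11, (if (jj : ℕ) = 0 then (1:ℝ) else -1) ≠ 0 := by
    intro jj; split <;> norm_num
  -- η applied on basis vectors
  have hrepr1 : ∀ (v : V) (jj : Fin 11),
      η v (e jj) = e.repr v jj * (if (jj:ℕ) = 0 then (1:ℝ) else -1) := by
    intro v jj
    conv_lhs => rw [← e.sum_repr v]
    simp [he', Finset.sum_ite_eq', mul_ite, -Module.Basis.sum_repr]
  have hrepr2 : ∀ (v : V) (jj : Fin 11),
      η (e jj) v = e.repr v jj * (if (jj:ℕ) = 0 then (1:ℝ) else -1) := by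
    intro v jj
    conv_lhs => rw [← e.sum_repr v]
    simp [he', Finset.sum_ite_eq, mul_ite, mul_comm, -Module.Basis.sum_repr]
  -- `ρ ∘ ι` is injective
  have hιinj : ∀ v : V, ρ (CliffordAlgebra.ι (Qf V η) v) = 0 → v = 0 := by
    intro v hv
    have hrel : ∀ w : V, (η v w + η w v) = 0 := by
      intro w
      have h1 := congrArg ρ (CliffordAlgebra.ι_mul_ι_add_swap (Q := Qf V η) v w)
      rw [map_add, map_mul, map_mul, hv, zero_mul, mul_zero, add_zero] at h1
      have hpol : QuadraticMap.polar (Qf V η) v w = -(η v w + η w v) := by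
        rw [Qf, LinearMap.BilinMap.polar_toQuadraticMap]
        simp; ring
      rw [hpol, AlgHom.commutes] at h1
      have h2 : algebraMap ℝ (Module.End ℝ S) (-(η v w + η w v)) = algebraMap ℝ _ 0 := by
        rw [map_zero]; exact h1.symm
      have := (algebraMap ℝ (Module.End ℝ S)).injective h2
      linarith
    have hz : ∀ jj : Fin 11, e.repr v jj = 0 := by
      intro jj
      have := hrel (e jj)
      rw [hrepr1, hrepr2] at this
      have h3 : e.repr v jj * (if (jj:ℕ) = 0 then (1:ℝ) else -1) = 0 := by linarith
      exact (mul_eq_zero.mp h3).resolve_right (hd jj)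
    have : e.repr v = 0 := by ext jj; simp [hz]
    simpa using e.repr.map_eq_zero_iff.mp this
  constructor
  · -- part (i)
    intro δ halt hskew h0
    -- the image of κ spans V
    set W : Submodule ℝ V := Submodule.span ℝ (Set.range fun p : S × S => κ p.1 p.2) with hW
    have hWtop : W = ⊤ := by
      by_contra hWne
      obtain ⟨f, hf0, hfW⟩ :=
        Submodule.exists_dual_map_eq_bot_of_lt_top (lt_top_iff_ne_top.mpr hWne) inferInstance
      -- η : V → Dual V is surjective
      have hηinj : Function.Injective (η : V →ₗ[ℝ] Module.Dual ℝ V) := by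
        rw [injective_iff_map_eq_zero]
        intro v hv
        have hz : ∀ jj : Fin 11, e.repr v jj = 0 := by
          intro jj
          have h3 : η v (e jj) = 0 := by rw [hv]; rfl
          rw [hrepr1] at h3
          exact (mul_eq_zero.mp h3).resolve_right (hd jj)
        have : e.repr v = 0 := by ext jj; simp [hz]
        simpa using e.repr.map_eq_zero_iff.mp this
      have hηsurj : Function.Surjective (η : V →ₗ[ℝ] Module.Dual ℝ V) := by
        rw [← LinearMap.injective_iff_surjective_of_finrank_eq_finrank
          (Subspace.dual_finrank_eq (K := ℝ) (V := V)).symm]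
        exact hηinj
      obtain ⟨v, hv⟩ := hηsurj f
      have hvz : ∀ s t : S, ω (ρ (CliffordAlgebra.ι (Qf V η) v) s) t = 0 := by
        intro s t
        rw [← hκ]
        have hmem : κ s t ∈ W := Submodule.subset_span ⟨(s, t), rfl⟩
        have : f (κ s t) ∈ W.map f := Submodule.mem_map_of_mem hmem
        rw [hfW] at this
        simpa [hv] using this
      have hv0 : v = 0 := by
        apply hιinj
        ext s
        exact hω_nd.1 _ (hvz s)
      rw [hv0, map_zero] at hv
      exact hf0 hv.symm
    have hker : W ≤ LinearMap.ker δ := by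
      rw [Submodule.span_le]
      rintro _ ⟨⟨s, t⟩, rfl⟩
      simp only [SetLike.mem_coe, LinearMap.mem_ker]
      ext v x
      simp [h0 s t v]
    rw [hWtop, top_le_iff, LinearMap.ker_eq_top] at hker
    exact hker
  · -- part (ii)
    intro δ halt hskew h0
    ext v w u
    have hA : ∀ u : V, (δ v w) u = 0 := by
      intro u
      have hcomm := (hj (δ v w) (hskew v w)).2 u
      have := congrArg ρ hcomm
      rw [map_sub, map_mul, map_mul, h0 v w, zero_mul, mul_zero, sub_zero] at this
      exact hιinj _ this.symm
    simp [hA]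
end
end
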